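/- arXiv:2408.14893 — 5 statements merged into one kernel-verified Lean document; each statement's English description precedes it below -/
import Mathlib

section
/- Let (A0,A1) be a quasi-Banach couple and let 0<p≤1 be such that both A0 and A1 are p-normed, i.e., ‖x+y‖_{A_i}^p ≤ ‖x‖_{A_i}^p + ‖y‖_{A_i}^p for i=0,1. Then either K(S(A0+A1),t,A0,A1) ≥ 1 for every t>0, or A0+A1 = A1 as sets. -/
open Filter Topology MeasureTheory ENNReal Set
open scoped Classical

noncomputable section

/-- A quasi-Banach space realized on a submodule of an ambient real vector space:
a quasi-norm (with quasi-triangle constant `qc`) which is complete on the carrier. -/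
structure QuasiNormedSpaceOn (V : Type*) [AddCommGroup V] [Module ℝ V] where
  carrier : Submodule ℝ V
  nrm : V → ℝ
  qc : ℝ
  one_le_qc : 1 ≤ qc
  nrm_nonneg : ∀ x : V, 0 ≤ nrm x
  nrm_eq_zero : ∀ x ∈ carrier, (nrm x = 0 ↔ x = 0)
  nrm_smul : ∀ (c : ℝ), ∀ x ∈ carrier, nrm (c • x) = |c| * nrm x
  quasi_triangle : ∀ x ∈ carrier, ∀ y ∈ carrier, nrm (x + y) ≤ qc * (nrm x + nrm y)
  complete : ∀ f : ℕ → V, (∀ k, f k ∈ carrier) →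
    (∀ ε : ℝ, 0 < ε → ∃ N : ℕ, ∀ m ≥ N, ∀ n ≥ N, nrm (f m - f n) < ε) →
    ∃ x ∈ carrier, Filter.Tendsto (fun k => nrm (f k - x)) Filter.atTop (nhds 0)

variable {V : Type*} [AddCommGroup V] [Module ℝ V]

/-- The sum `B0 + B1` of two subsets of the ambient space. -/
def sumSetG (B0 B1 : Set V) : Set V := {x | ∃ b0 ∈ B0, ∃ b1 ∈ B1, x = b0 + b1}

/-- Peetre's K-functional for a (generalized) couple given by sets `B0, B1`
with quasi-norms `N0, N1`. -/
def Kgen (B0 B1 : Set V) (N0 N1 : V → ℝ) (t : ℝ) (x : V) : ℝ :=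
  sInf {r : ℝ | ∃ b0 ∈ B0, ∃ b1 ∈ B1, x = b0 + b1 ∧ r = N0 b0 + t * N1 b1}

/-- Quasi-norm of the sum space. -/
def sumNormG (B0 B1 : Set V) (N0 N1 : V → ℝ) (x : V) : ℝ := Kgen B0 B1 N0 N1 1 x

/-- The set `A0 + A1` for a couple. -/
def csum (S0 S1 : QuasiNormedSpaceOn V) : Set V :=
  sumSetG (S0.carrier : Set V) (S1.carrier : Set V)

/-- Peetre's K-functional `K(x, t, A0, A1)` of a couple. -/
def Kfun (S0 S1 : QuasiNormedSpaceOn V) (t : ℝ) (x : V) : ℝ :=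
  Kgen (S0.carrier : Set V) (S1.carrier : Set V) S0.nrm S1.nrm t x

/-- The quasi-norm `‖x‖_{A0+A1} = K(x,1,A0,A1)`. -/
def sumNorm (S0 S1 : QuasiNormedSpaceOn V) (x : V) : ℝ := Kfun S0 S1 1 x

/-- The set `A0 ∩ A1`. -/
def cinter (S0 S1 : QuasiNormedSpaceOn V) : Set V :=
  (S0.carrier : Set V) ∩ (S1.carrier : Set V)

/-- The quasi-norm `‖x‖_{A0∩A1} = max(‖x‖_{A0}, ‖x‖_{A1})`. -/
def interNorm (S0 S1 : QuasiNormedSpaceOn V) (x : V) : ℝ := max (S0.nrm x) (S1.nrm x)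

/-- The unit sphere `S(A0+A1)`. -/
def sumSphere (S0 S1 : QuasiNormedSpaceOn V) : Set V :=
  {x | x ∈ csum S0 S1 ∧ sumNorm S0 S1 x = 1}

/-- `K(A, t, A0, A1) = sup_{a ∈ A} K(a, t, A0, A1)`. -/
def KSet (S0 S1 : QuasiNormedSpaceOn V) (t : ℝ) (A : Set V) : ℝ :=
  sSup (Kfun S0 S1 t '' A)

/-- `(A0, A1)` is a quasi-Banach couple: both spaces are continuously embedded
in the (Hausdorff topological vector space) ambient space `V`. -/
structure IsQBCouple {V : Type*} [AddCommGroup V] [Module ℝ V] [TopologicalSpace V]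
    [IsTopologicalAddGroup V] [ContinuousSMul ℝ V] [T2Space V]
    (S0 S1 : QuasiNormedSpaceOn V) : Prop where
  embed0 : ∀ f : ℕ → V, (∀ k, f k ∈ S0.carrier) →
    Filter.Tendsto (fun k => S0.nrm (f k)) Filter.atTop (nhds 0) →
    Filter.Tendsto f Filter.atTop (nhds (0 : V))
  embed1 : ∀ f : ℕ → V, (∀ k, f k ∈ S1.carrier) →
    Filter.Tendsto (fun k => S1.nrm (f k)) Filter.atTop (nhds 0) →
    Filter.Tendsto f Filter.atTop (nhds (0 : V))

/-- `A` is not closed in `B` with respect to the quasi-norm `NB`: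
some sequence in `A` converges (w.r.t. `NB`) to a point of `B` outside `A`. -/
def NotClosedIn (A B : Set V) (NB : V → ℝ) : Prop :=
  ∃ (f : ℕ → V) (x : V), (∀ k, f k ∈ A) ∧ x ∈ B ∧ x ∉ A ∧
    Filter.Tendsto (fun k => NB (f k - x)) Filter.atTop (nhds 0)

/-- Membership in the real interpolation space `(B0, B1)_{θ,p}` (generalized couple).
For `p = ∞` it is the boundedness of `t^{-θ} K(x,t)`; for finite `p` finiteness of
`∫_0^∞ (t^{-θ}K(x,t))^p dt/t`. -/
def interpMemG (B0 B1 : Set V) (N0 N1 : V → ℝ) (θ : ℝ) (p : ℝ≥0∞) (x : V) : Prop :=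
  x ∈ sumSetG B0 B1 ∧
    if p = ⊤ then ∃ M : ℝ, ∀ t : ℝ, 0 < t → t ^ (-θ) * Kgen B0 B1 N0 N1 t x ≤ M
    else (∫⁻ t in Set.Ioi (0:ℝ),
        ENNReal.ofReal ((t ^ (-θ) * Kgen B0 B1 N0 N1 t x) ^ p.toReal / t)) < ⊤

/-- The quasi-norm of the real interpolation space `(B0, B1)_{θ,p}`. -/
def interpNormG (B0 B1 : Set V) (N0 N1 : V → ℝ) (θ : ℝ) (p : ℝ≥0∞) (x : V) : ℝ :=
  if p = ⊤ then sSup {r : ℝ | ∃ t : ℝ, 0 < t ∧ r = t ^ (-θ) * Kgen B0 B1 N0 N1 t x}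
  else ((∫⁻ t in Set.Ioi (0:ℝ),
      ENNReal.ofReal ((t ^ (-θ) * Kgen B0 B1 N0 N1 t x) ^ p.toReal / t)) ^ (1 / p.toReal)).toReal

/-- The real interpolation space as a set (generalized couple). -/
def interpSetG (B0 B1 : Set V) (N0 N1 : V → ℝ) (θ : ℝ) (p : ℝ≥0∞) : Set V :=
  {x | interpMemG B0 B1 N0 N1 θ p x}

/-- The real interpolation space `(A0, A1)_{θ,p}` of a couple, as a set. -/
def interpSet (S0 S1 : QuasiNormedSpaceOn V) (θ : ℝ) (p : ℝ≥0∞) : Set V :=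
  interpSetG (S0.carrier : Set V) (S1.carrier : Set V) S0.nrm S1.nrm θ p

/-- The quasi-norm of `(A0, A1)_{θ,p}`. -/
def interpNorm (S0 S1 : QuasiNormedSpaceOn V) (θ : ℝ) (p : ℝ≥0∞) (x : V) : ℝ :=
  interpNormG (S0.carrier : Set V) (S1.carrier : Set V) S0.nrm S1.nrm θ p x

/-- A quasi-Banach lattice of real sequences indexed by `ℤ`. -/
structure SeqLattice where
  mem : (ℤ → ℝ) → Prop
  nrm : (ℤ → ℝ) → ℝ
  qc : ℝ
  one_le_qc : 1 ≤ qc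
  zero_mem : mem 0
  add_mem : ∀ f g, mem f → mem g → mem (f + g)
  smul_mem : ∀ (c : ℝ) (f), mem f → mem (c • f)
  nrm_nonneg : ∀ f, 0 ≤ nrm f
  nrm_eq_zero : ∀ f, mem f → (nrm f = 0 ↔ f = 0)
  nrm_smul : ∀ (c : ℝ) (f), mem f → nrm (c • f) = |c| * nrm f
  quasi_triangle : ∀ f g, mem f → mem g → nrm (f + g) ≤ qc * (nrm f + nrm g)
  latticeConst : ℝ
  latticeConst_pos : 0 < latticeConst
  lattice : ∀ f g, (∀ n : ℤ, |f n| ≤ |g n|) → mem g →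
    mem f ∧ nrm f ≤ latticeConst * nrm g
  complete : ∀ F : ℕ → (ℤ → ℝ), (∀ k, mem (F k)) →
    (∀ ε : ℝ, 0 < ε → ∃ N : ℕ, ∀ m ≥ N, ∀ n ≥ N, nrm (F m - F n) < ε) →
    ∃ f, mem f ∧ Filter.Tendsto (fun k => nrm (F k - f)) Filter.atTop (nhds 0)

/-- The sequence `(K(a, 2^n, A0, A1))_{n ∈ ℤ}`. -/
def Kseq (S0 S1 : QuasiNormedSpaceOn V) (a : V) : ℤ → ℝ :=
  fun n => Kfun S0 S1 ((2:ℝ) ^ n) a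

end


section Stmt0Aux

open Filter

variable {V : Type*} [AddCommGroup V] [Module ℝ V]

lemma nrm_zero' (S : QuasiNormedSpaceOn V) : S.nrm 0 = 0 := by
  have h := S.nrm_smul 0 0 S.carrier.zero_mem
  simpa using h

lemma nrm_neg' (S : QuasiNormedSpaceOn V) {x : V} (hx : x ∈ S.carrier) :
    S.nrm (-x) = S.nrm x := by
  have h := S.nrm_smul (-1) x hx
  simpa using h

lemma mem_csum_of_mem0 {S0 S1 : QuasiNormedSpaceOn V} {x : V} (hx : x ∈ S0.carrier) :
    x ∈ csum S0 S1 := ⟨x, hx, 0, S1.carrier.zero_mem, (add_zero x).symm⟩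

lemma mem_csum_of_mem1 {S0 S1 : QuasiNormedSpaceOn V} {x : V} (hx : x ∈ S1.carrier) :
    x ∈ csum S0 S1 := ⟨0, S0.carrier.zero_mem, x, hx, (zero_add x).symm⟩

lemma smul_mem_csum {S0 S1 : QuasiNormedSpaceOn V} {x : V} (c : ℝ) (hx : x ∈ csum S0 S1) :
    c • x ∈ csum S0 S1 := by
  obtain ⟨b0, h0, b1, h1, rfl⟩ := hx
  exact ⟨c • b0, S0.carrier.smul_mem c h0, c • b1, S1.carrier.smul_mem c h1,
    smul_add c b0 b1⟩

lemma Kfun_set_nonneg (S0 S1 : QuasiNormedSpaceOn V) {t : ℝ} (ht : 0 ≤ t) (x : V) :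
    ∀ r ∈ {r : ℝ | ∃ b0 ∈ (S0.carrier : Set V), ∃ b1 ∈ (S1.carrier : Set V),
      x = b0 + b1 ∧ r = S0.nrm b0 + t * S1.nrm b1}, 0 ≤ r := by
  rintro r ⟨b0, h0, b1, h1, -, rfl⟩
  have h2 := S0.nrm_nonneg b0
  have h3 := S1.nrm_nonneg b1
  have := mul_nonneg ht h3
  linarith

lemma Kfun_nonneg (S0 S1 : QuasiNormedSpaceOn V) {t : ℝ} (ht : 0 ≤ t) (x : V) :
    0 ≤ Kfun S0 S1 t x :=
  Real.sInf_nonneg (Kfun_set_nonneg S0 S1 ht x)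

lemma Kfun_le (S0 S1 : QuasiNormedSpaceOn V) {t : ℝ} (ht : 0 ≤ t) {x b0 b1 : V}
    (h0 : b0 ∈ S0.carrier) (h1 : b1 ∈ S1.carrier) (hx : x = b0 + b1) :
    Kfun S0 S1 t x ≤ S0.nrm b0 + t * S1.nrm b1 :=
  csInf_le ⟨0, fun r hr => Kfun_set_nonneg S0 S1 ht x r hr⟩ ⟨b0, h0, b1, h1, hx, rfl⟩

lemma Kfun_exists_lt (S0 S1 : QuasiNormedSpaceOn V) {t : ℝ} {x : V} (hx : x ∈ csum S0 S1)
    {c : ℝ} (hc : Kfun S0 S1 t x < c) :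
    ∃ b0 ∈ S0.carrier, ∃ b1 ∈ S1.carrier, x = b0 + b1 ∧ S0.nrm b0 + t * S1.nrm b1 < c := by
  obtain ⟨a0, h0, a1, h1, he⟩ := hx
  have hc' : sInf {r : ℝ | ∃ b0 ∈ (S0.carrier : Set V), ∃ b1 ∈ (S1.carrier : Set V),
      x = b0 + b1 ∧ r = S0.nrm b0 + t * S1.nrm b1} < c := hc
  have hne : Set.Nonempty {r : ℝ | ∃ b0 ∈ (S0.carrier : Set V), ∃ b1 ∈ (S1.carrier : Set V),
      x = b0 + b1 ∧ r = S0.nrm b0 + t * S1.nrm b1} := ⟨_, ⟨a0, h0, a1, h1, he, rfl⟩⟩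
  obtain ⟨r, hr, hrc⟩ := exists_lt_of_csInf_lt hne hc' 
  obtain ⟨b0, hb0, b1, hb1, hbe, rfl⟩ := hr
  exact ⟨b0, hb0, b1, hb1, hbe, hrc⟩

lemma le_mul_Kfun {S0 S1 : QuasiNormedSpaceOn V} {x : V} (hx : x ∈ csum S0 S1)
    {t M c : ℝ} (hM : 0 ≤ M)
    (h : ∀ b0 ∈ S0.carrier, ∀ b1 ∈ S1.carrier, x = b0 + b1 →
      c ≤ M * (S0.nrm b0 + t * S1.nrm b1)) :
    c ≤ M * Kfun S0 S1 t x := by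
  refine le_of_forall_pos_le_add (fun ε hε => ?_)
  have hδ : 0 < ε / (M + 1) := div_pos hε (by linarith)
  have hlt : Kfun S0 S1 t x < Kfun S0 S1 t x + ε / (M + 1) := by linarith
  obtain ⟨b0, h0, b1, h1, he, hv⟩ := Kfun_exists_lt S0 S1 hx hlt
  have hc := h b0 h0 b1 h1 he
  have h2 : M * (S0.nrm b0 + t * S1.nrm b1) ≤ M * (Kfun S0 S1 t x + ε / (M + 1)) :=
    mul_le_mul_of_nonneg_left hv.le hM
  have h3 : M * (ε / (M + 1)) ≤ ε := by
    rw [mul_div_assoc', div_le_iff₀ (by linarith : (0:ℝ) < M + 1)]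
    nlinarith
  have h4 : M * (Kfun S0 S1 t x + ε / (M + 1))
      = M * Kfun S0 S1 t x + M * (ε / (M + 1)) := by ring
  linarith

lemma Kfun_smul_le (S0 S1 : QuasiNormedSpaceOn V) {t : ℝ} (ht : 0 ≤ t) {x : V}
    (hx : x ∈ csum S0 S1) (c : ℝ) :
    Kfun S0 S1 t (c • x) ≤ |c| * Kfun S0 S1 t x := by
  refine le_mul_Kfun hx (abs_nonneg c) (fun b0 h0 b1 h1 he => ?_)
  have key : Kfun S0 S1 t (c • x) ≤ S0.nrm (c • b0) + t * S1.nrm (c • b1) :=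
    Kfun_le S0 S1 ht (S0.carrier.smul_mem c h0) (S1.carrier.smul_mem c h1)
      (by rw [he, smul_add])
  rw [S0.nrm_smul c b0 h0, S1.nrm_smul c b1 h1] at key
  calc Kfun S0 S1 t (c • x) ≤ |c| * S0.nrm b0 + t * (|c| * S1.nrm b1) := key
    _ = |c| * (S0.nrm b0 + t * S1.nrm b1) := by ring

lemma Kfun_le_max (S0 S1 : QuasiNormedSpaceOn V) {t : ℝ} (ht : 0 ≤ t) {x : V}
    (hx : x ∈ csum S0 S1) :
    Kfun S0 S1 t x ≤ max 1 t * Kfun S0 S1 1 x := by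
  refine le_mul_Kfun hx (le_trans zero_le_one (le_max_left 1 t)) (fun b0 h0 b1 h1 he => ?_)
  have key := Kfun_le S0 S1 ht h0 h1 he
  have hn0 := S0.nrm_nonneg b0
  have hn1 := S1.nrm_nonneg b1
  have h1' : (1:ℝ) ≤ max 1 t := le_max_left 1 t
  have h2' : t ≤ max 1 t := le_max_right 1 t
  nlinarith [mul_nonneg (sub_nonneg.2 h1') hn0, mul_nonneg (sub_nonneg.2 h2') hn1]

lemma eq_zero_of_K1_eq_zero {V : Type*} [AddCommGroup V] [Module ℝ V] [TopologicalSpace V]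
    [IsTopologicalAddGroup V] [ContinuousSMul ℝ V] [T2Space V]
    {S0 S1 : QuasiNormedSpaceOn V} (hcouple : IsQBCouple S0 S1) {x : V}
    (hx : x ∈ csum S0 S1) (h0 : Kfun S0 S1 1 x = 0) : x = 0 := by
  have hstep : ∀ k : ℕ, ∃ bb : V × V, bb.1 ∈ S0.carrier ∧ bb.2 ∈ S1.carrier ∧
      x = bb.1 + bb.2 ∧ S0.nrm bb.1 + S1.nrm bb.2 < 1 / ((k : ℝ) + 1) := by
    intro k
    have hlt : Kfun S0 S1 1 x < 1 / ((k : ℝ) + 1) := by rw [h0]; positivity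
    obtain ⟨b0, hb0, b1, hb1, he, hv⟩ := Kfun_exists_lt S0 S1 hx hlt
    exact ⟨(b0, b1), hb0, hb1, he, by rw [one_mul] at hv; exact hv⟩
  choose bb hb1 hb2 hb3 hb4 using hstep
  have hn0 : Tendsto (fun k => S0.nrm (bb k).1) atTop (nhds 0) := by
    refine squeeze_zero (fun k => S0.nrm_nonneg _) (fun k => ?_)
      tendsto_one_div_add_atTop_nhds_zero_nat
    have := hb4 k
    have := S1.nrm_nonneg (bb k).2
    linarith
  have hn1 : Tendsto (fun k => S1.nrm (bb k).2) atTop (nhds 0) := by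
    refine squeeze_zero (fun k => S1.nrm_nonneg _) (fun k => ?_)
      tendsto_one_div_add_atTop_nhds_zero_nat
    have := hb4 k
    have := S0.nrm_nonneg (bb k).1
    linarith
  have ht0 : Tendsto (fun k => (bb k).1) atTop (nhds (0 : V)) := hcouple.embed0 _ hb1 hn0
  have ht1 : Tendsto (fun k => (bb k).2) atTop (nhds (0 : V)) := hcouple.embed1 _ hb2 hn1
  have hsum : Tendsto (fun k => (bb k).1 + (bb k).2) atTop (nhds (0 : V)) := by
    have := ht0.add ht1
    simpa using this
  have heq : (fun _ : ℕ => x) = fun k => (bb k).1 + (bb k).2 := funext hb3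
  have hxt : Tendsto (fun _ : ℕ => x) atTop (nhds (0 : V)) := by rw [heq]; exact hsum
  exact tendsto_nhds_unique tendsto_const_nhds hxt

lemma nrm_sum_rpow_le (S : QuasiNormedSpaceOn V) {p : ℝ} (hp0 : 0 < p)
    (hps : ∀ x ∈ S.carrier, ∀ y ∈ S.carrier, S.nrm (x + y) ^ p ≤ S.nrm x ^ p + S.nrm y ^ p)
    (u : ℕ → V) (hu : ∀ k, u k ∈ S.carrier) (s : Finset ℕ) :
    S.nrm (∑ k ∈ s, u k) ^ p ≤ ∑ k ∈ s, S.nrm (u k) ^ p := by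
  induction s using Finset.cons_induction with
  | empty => simp [nrm_zero', Real.zero_rpow hp0.ne']
  | cons a s ha ih =>
    rw [Finset.sum_cons, Finset.sum_cons]
    calc S.nrm (u a + ∑ k ∈ s, u k) ^ p
        ≤ S.nrm (u a) ^ p + S.nrm (∑ k ∈ s, u k) ^ p :=
          hps _ (hu a) _ (S.carrier.sum_mem (fun k _ => hu k))
      _ ≤ _ := by linarith

lemma geom_Ico_le {q : ℝ} (h0 : 0 ≤ q) (h1 : q < 1) (n m : ℕ) (hnm : n ≤ m) :
    ∑ k ∈ Finset.Ico n m, q ^ k ≤ q ^ n / (1 - q) := by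
  rw [geom_sum_Ico h1.ne hnm]
  have hq : (0:ℝ) < 1 - q := by linarith
  have key : (q ^ m - q ^ n) / (q - 1) = (q ^ n - q ^ m) / (1 - q) := by
    rw [← neg_div_neg_eq]
    ring_nf
  rw [key]
  exact (div_le_div_iff_of_pos_right hq).mpr (by linarith [pow_nonneg h0 m])

end Stmt0Aux

/-- If `(A0,A1)` is a quasi-Banach couple and both `A0` and `A1` are
`p`-normed for some `0 < p ≤ 1`, then either `K(S(A0+A1), t, A0, A1) ≥ 1` for every
`t > 0`, or `A0 + A1 = A1` as sets. -/
theorem stmt0 {V : Type*} [AddCommGroup V] [Module ℝ V] [TopologicalSpace V]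
    [IsTopologicalAddGroup V] [ContinuousSMul ℝ V] [T2Space V]
    (S0 S1 : QuasiNormedSpaceOn V) (hcouple : IsQBCouple S0 S1)
    (p : ℝ) (hp0 : 0 < p) (hp1 : p ≤ 1)
    (hpnorm0 : ∀ x ∈ S0.carrier, ∀ y ∈ S0.carrier,
      S0.nrm (x + y) ^ p ≤ S0.nrm x ^ p + S0.nrm y ^ p)
    (hpnorm1 : ∀ x ∈ S1.carrier, ∀ y ∈ S1.carrier,
      S1.nrm (x + y) ^ p ≤ S1.nrm x ^ p + S1.nrm y ^ p) :
    (∀ t : ℝ, 0 < t → 1 ≤ KSet S0 S1 t (sumSphere S0 S1)) ∨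
      csum S0 S1 = (S1.carrier : Set V) := by
  rw [or_iff_not_imp_left]
  intro hcon
  push_neg at hcon
  obtain ⟨t₀, ht₀, hγ1⟩ := hcon
  set γ : ℝ := KSet S0 S1 t₀ (sumSphere S0 S1) with hγdef
  have ht₀' : (0:ℝ) ≤ t₀ := ht₀.le
  have hbdd : BddAbove (Kfun S0 S1 t₀ '' sumSphere S0 S1) := by
    refine ⟨max 1 t₀, ?_⟩
    rintro z ⟨y, ⟨hy1, hy2⟩, rfl⟩
    have h := Kfun_le_max S0 S1 ht₀' hy1
    have hy2' : Kfun S0 S1 1 y = 1 := hy2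
    rw [hy2', mul_one] at h
    exact h
  have hγ0 : 0 ≤ γ := by
    rcases Set.eq_empty_or_nonempty (sumSphere S0 S1) with he | ⟨y, hy⟩
    · rw [hγdef, KSet, he, Set.image_empty, Real.sSup_empty]
    · exact le_trans (Kfun_nonneg S0 S1 ht₀' y) (le_csSup hbdd ⟨y, hy, rfl⟩)
  set γ' : ℝ := (γ + 1) / 2 with hγ'def
  have hγ'0 : 0 < γ' := by rw [hγ'def]; linarith
  have hγ'1 : γ' < 1 := by rw [hγ'def]; linarith
  have hγγ' : γ < γ' := by rw [hγ'def]; linarith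
  -- key contraction estimate
  have key : ∀ v ∈ csum S0 S1, Kfun S0 S1 1 v ≠ 0 →
      Kfun S0 S1 t₀ v < γ' * Kfun S0 S1 1 v := by
    intro v hv hvne
    have hr0 : 0 < Kfun S0 S1 1 v :=
      lt_of_le_of_ne (Kfun_nonneg S0 S1 zero_le_one v) (Ne.symm hvne)
    set r := Kfun S0 S1 1 v with hrdef
    have hy : r⁻¹ • v ∈ csum S0 S1 := smul_mem_csum _ hv
    have hy1 : Kfun S0 S1 1 (r⁻¹ • v) = 1 := by
      have hle : Kfun S0 S1 1 (r⁻¹ • v) ≤ |r⁻¹| * r := Kfun_smul_le S0 S1 zero_le_one hv r⁻¹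
      rw [abs_of_pos (inv_pos.2 hr0), inv_mul_cancel₀ hr0.ne'] at hle
      have hge : r ≤ r * Kfun S0 S1 1 (r⁻¹ • v) := by
        have h := Kfun_smul_le S0 S1 zero_le_one hy r
        rw [smul_inv_smul₀ hr0.ne', abs_of_pos hr0] at h
        exact h
      have : 1 ≤ Kfun S0 S1 1 (r⁻¹ • v) := by
        rw [← mul_le_mul_iff_right₀ hr0, mul_one]
        exact hge
      linarith
    have hsph : r⁻¹ • v ∈ sumSphere S0 S1 := ⟨hy, hy1⟩
    have hKγ : Kfun S0 S1 t₀ (r⁻¹ • v) ≤ γ := le_csSup hbdd ⟨_, hsph, rfl⟩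
    have h1 : Kfun S0 S1 t₀ v ≤ r * Kfun S0 S1 t₀ (r⁻¹ • v) := by
      have h := Kfun_smul_le S0 S1 ht₀' hy r
      rw [smul_inv_smul₀ hr0.ne', abs_of_pos hr0] at h
      exact h
    calc Kfun S0 S1 t₀ v ≤ r * Kfun S0 S1 t₀ (r⁻¹ • v) := h1
      _ ≤ r * γ := mul_le_mul_of_nonneg_left hKγ hr0.le
      _ < r * γ' := by exact mul_lt_mul_of_pos_left hγγ' hr0
      _ = γ' * r := mul_comm _ _
  -- the choice function for one step of the iteration
  have step : ∀ v : V, ∃ bb : V × V, v ∈ csum S0 S1 →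
      bb.1 ∈ S0.carrier ∧ bb.2 ∈ S1.carrier ∧ v = bb.1 + bb.2 ∧
        S0.nrm bb.1 + t₀ * S1.nrm bb.2 ≤ γ' * Kfun S0 S1 1 v := by
    intro v
    by_cases hv : v ∈ csum S0 S1
    · by_cases hvz : Kfun S0 S1 1 v = 0
      · refine ⟨(0, 0), fun _ => ?_⟩
        have hv0 : v = 0 := eq_zero_of_K1_eq_zero hcouple hv hvz
        refine ⟨S0.carrier.zero_mem, S1.carrier.zero_mem, by rw [hv0]; simp, ?_⟩
        have hz0 : S0.nrm ((0,0) : V × V).1 = 0 := nrm_zero' S0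
        have hz1 : S1.nrm ((0,0) : V × V).2 = 0 := nrm_zero' S1
        rw [hvz, hz0, hz1]
        simp
      · obtain ⟨b0, h0, b1, h1, he, hlt⟩ := Kfun_exists_lt S0 S1 hv (key v hv hvz)
        exact ⟨(b0, b1), fun _ => ⟨h0, h1, he, hlt.le⟩⟩
    · exact ⟨(0, 0), fun h => absurd h hv⟩
  choose ww hww using step
  -- now prove csum S0 S1 = S1.carrier
  refine Set.Subset.antisymm ?_ (fun x hx => mem_csum_of_mem1 hx)
  intro x hx
  by_cases hxz : Kfun S0 S1 1 x = 0
  · rw [eq_zero_of_K1_eq_zero hcouple hx hxz]; exact S1.carrier.zero_mem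
  have hr0 : 0 < Kfun S0 S1 1 x :=
    lt_of_le_of_ne (Kfun_nonneg S0 S1 zero_le_one x) (Ne.symm hxz)
  set r := Kfun S0 S1 1 x with hrdef
  -- the iteration sequences
  let a : ℕ → V := fun n => Nat.rec x (fun _ v => (ww v).1) n
  let u : ℕ → V := fun n => (ww (a n)).2
  have ha0 : a 0 = x := rfl
  have hamem : ∀ n, a n ∈ csum S0 S1 := by
    intro n
    induction n with
    | zero => exact hx
    | succ n ih => exact mem_csum_of_mem0 (hww (a n) ih).1
  have hprop : ∀ n, a (n + 1) ∈ S0.carrier ∧ u n ∈ S1.carrier ∧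
      a n = a (n + 1) + u n ∧
      S0.nrm (a (n + 1)) + t₀ * S1.nrm (u n) ≤ γ' * Kfun S0 S1 1 (a n) :=
    fun n => hww (a n) (hamem n)
  have humem : ∀ n, u n ∈ S1.carrier := fun n => (hprop n).2.1
  have haK : ∀ n, Kfun S0 S1 1 (a n) ≤ γ' ^ n * r := by
    intro n
    induction n with
    | zero => rw [ha0, pow_zero, one_mul]
    | succ n ih =>
      have h1 : Kfun S0 S1 1 (a (n + 1)) ≤ S0.nrm (a (n + 1)) + 1 * S1.nrm 0 :=
        Kfun_le S0 S1 zero_le_one (hprop n).1 S1.carrier.zero_mem (add_zero _).symm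
      rw [nrm_zero', mul_zero, add_zero] at h1
      have h4 : 0 ≤ t₀ * S1.nrm (u n) := mul_nonneg ht₀' (S1.nrm_nonneg _)
      have h3 := (hprop n).2.2.2
      calc Kfun S0 S1 1 (a (n + 1)) ≤ γ' * Kfun S0 S1 1 (a n) := by linarith
        _ ≤ γ' * (γ' ^ n * r) := mul_le_mul_of_nonneg_left ih hγ'0.le
        _ = γ' ^ (n + 1) * r := by ring
  have hN0 : ∀ n, S0.nrm (a (n + 1)) ≤ γ' ^ (n + 1) * r := by
    intro n
    have h3 := (hprop n).2.2.2
    have h4 : 0 ≤ t₀ * S1.nrm (u n) := mul_nonneg ht₀' (S1.nrm_nonneg _)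
    have h5 := mul_le_mul_of_nonneg_left (haK n) hγ'0.le
    have h6 : γ' * (γ' ^ n * r) = γ' ^ (n + 1) * r := by ring
    linarith
  have hN1 : ∀ n, S1.nrm (u n) ≤ γ' ^ (n + 1) * r / t₀ := by
    intro n
    rw [le_div_iff₀ ht₀]
    have h3 := (hprop n).2.2.2
    have h4 : 0 ≤ S0.nrm (a (n + 1)) := S0.nrm_nonneg _
    have h5 := mul_le_mul_of_nonneg_left (haK n) hγ'0.le
    have h6 : γ' * (γ' ^ n * r) = γ' ^ (n + 1) * r := by ring
    nlinarith
  -- partial sums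
  let s : ℕ → V := fun n => ∑ k ∈ Finset.range n, u k
  have hsmem : ∀ n, s n ∈ S1.carrier := fun n => S1.carrier.sum_mem (fun k _ => humem k)
  have hxeq : ∀ n, x = a n + s n := by
    intro n
    induction n with
    | zero =>
      have : s 0 = 0 := Finset.sum_range_zero u
      rw [ha0, this, add_zero]
    | succ n ih =>
      have hd := (hprop n).2.2.1
      have hs : s (n + 1) = s n + u n := Finset.sum_range_succ u n
      rw [hs, ih, hd]
      abel
  -- Cauchy estimate via p-norms
  set q : ℝ := γ' ^ p with hqdef
  have hq0 : 0 < q := Real.rpow_pos_of_pos hγ'0 p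
  have hq1 : q < 1 := Real.rpow_lt_one hγ'0.le hγ'1 hp0
  set C : ℝ := (r / t₀) ^ p * q with hCdef
  have hC0 : 0 < C := mul_pos (Real.rpow_pos_of_pos (div_pos hr0 ht₀) p) hq0
  have hupow : ∀ k, S1.nrm (u k) ^ p ≤ C * q ^ k := by
    intro k
    have h1 : S1.nrm (u k) ^ p ≤ (γ' ^ (k + 1) * r / t₀) ^ p :=
      Real.rpow_le_rpow (S1.nrm_nonneg _) (hN1 k) hp0.le
    have h2 : (γ' ^ (k + 1) * r / t₀ : ℝ) ^ p = (γ' ^ (k + 1) : ℝ) ^ p * (r / t₀) ^ p := by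
      rw [mul_div_assoc, Real.mul_rpow (pow_nonneg hγ'0.le _) (div_nonneg hr0.le ht₀')]
    have h3 : ((γ' ^ (k + 1) : ℝ)) ^ p = q ^ (k + 1) := by
      rw [hqdef, ← Real.rpow_natCast γ' (k + 1), ← Real.rpow_natCast (γ' ^ p) (k + 1),
        ← Real.rpow_mul hγ'0.le, ← Real.rpow_mul hγ'0.le, mul_comm]
    calc S1.nrm (u k) ^ p ≤ (γ' ^ (k + 1) : ℝ) ^ p * (r / t₀) ^ p := by rw [← h2]; exact h1
      _ = q ^ (k + 1) * (r / t₀) ^ p := by rw [h3]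
      _ = C * q ^ k := by rw [hCdef]; ring
  have hcauchy : ∀ ε : ℝ, 0 < ε → ∃ N : ℕ, ∀ m ≥ N, ∀ n ≥ N, S1.nrm (s m - s n) < ε := by
    intro ε hε
    have hεp : 0 < ε ^ p := Real.rpow_pos_of_pos hε p
    have htend : Tendsto (fun n : ℕ => C * q ^ n / (1 - q)) atTop (nhds 0) := by
      have h := ((tendsto_pow_atTop_nhds_zero_of_lt_one hq0.le hq1).const_mul C).div_const (1 - q)
      simpa using h
    obtain ⟨N, hN⟩ := Filter.eventually_atTop.mp (htend.eventually (gt_mem_nhds hεp))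
    refine ⟨N, ?_⟩
    have main : ∀ m n, N ≤ n → n ≤ m → S1.nrm (s m - s n) < ε := by
      intro m n hn hnm
      have hsub : s m - s n = ∑ k ∈ Finset.Ico n m, u k :=
        (Finset.sum_Ico_eq_sub u hnm).symm
      have hp_le : S1.nrm (s m - s n) ^ p ≤ ∑ k ∈ Finset.Ico n m, S1.nrm (u k) ^ p := by
        rw [hsub]; exact nrm_sum_rpow_le S1 hp0 hpnorm1 u humem _
      have hsum : ∑ k ∈ Finset.Ico n m, S1.nrm (u k) ^ p ≤ C * (q ^ n / (1 - q)) := by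
        calc ∑ k ∈ Finset.Ico n m, S1.nrm (u k) ^ p
            ≤ ∑ k ∈ Finset.Ico n m, C * q ^ k := Finset.sum_le_sum (fun k _ => hupow k)
          _ = C * ∑ k ∈ Finset.Ico n m, q ^ k := (Finset.mul_sum _ _ _).symm
          _ ≤ C * (q ^ n / (1 - q)) :=
              mul_le_mul_of_nonneg_left (geom_Ico_le hq0.le hq1 n m hnm) hC0.le
      have hfinal : S1.nrm (s m - s n) ^ p < ε ^ p := by
        have h7 := hN n hn
        have h8 : C * (q ^ n / (1 - q)) = C * q ^ n / (1 - q) := by ring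
        calc S1.nrm (s m - s n) ^ p ≤ C * (q ^ n / (1 - q)) := le_trans hp_le hsum
          _ = C * q ^ n / (1 - q) := h8
          _ < ε ^ p := h7
      by_contra hcon2
      push_neg at hcon2
      exact absurd (Real.rpow_le_rpow hε.le hcon2 hp0.le) (not_le.2 hfinal)
    intro m hm n hn
    rcases le_total n m with h | h
    · exact main m n hn h
    · have h9 := main n m hm h
      have hneg : S1.nrm (s m - s n) = S1.nrm (s n - s m) := by
        rw [show s m - s n = -(s n - s m) by abel,
          nrm_neg' S1 (S1.carrier.sub_mem (hsmem n) (hsmem m))]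
      rw [hneg]; exact h9
  obtain ⟨sl, hslmem, hsl⟩ := S1.complete s hsmem hcauchy
  have hs_to : Tendsto s atTop (nhds sl) := by
    have h1 : Tendsto (fun k => s k - sl) atTop (nhds (0 : V)) :=
      hcouple.embed1 _ (fun k => S1.carrier.sub_mem (hsmem k) hslmem) hsl
    have h2 := h1.add_const sl
    simpa using h2
  have ha_to : Tendsto (fun n => a (n + 1)) atTop (nhds (0 : V)) := by
    apply hcouple.embed0 _ (fun n => (hprop n).1)
    apply squeeze_zero (fun n => S0.nrm_nonneg _) (fun n => hN0 n)
    have h1 := ((tendsto_pow_atTop_nhds_zero_of_lt_one hγ'0.le hγ'1).comp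
      (tendsto_add_atTop_nat 1)).mul_const r
    simpa [Function.comp] using h1
  have hx_to : Tendsto (fun _ : ℕ => x) atTop (nhds sl) := by
    have h1 := ha_to.add (hs_to.comp (tendsto_add_atTop_nat 1))
    rw [zero_add] at h1
    have heq : (fun _ : ℕ => x) = fun n => a (n + 1) + s (n + 1) :=
      funext fun n => hxeq (n + 1)
    rw [heq]
    simpa [Function.comp] using h1
  have hxsl : x = sl := tendsto_nhds_unique tendsto_const_nhds hx_to
  rw [hxsl]
  exact hslmem
end

section
/- Let (A0,A1) be a quasi-Banach couple. The following are equivalent: (a) there is a constant c>0 such that K(S(A0+A1),t,A0,A1) > c for all t>0; (b) for every pair of non-increasing sequences (ε_n), (t_n) of positive reals converging to 0, there exists x ∈ A0+A1 such that the sequence (K(x,t_n,A0,A1)) is not O(ε_n), i.e., there is no constant C>0 with K(x,t_n,A0,A1) ≤ Cε_n for all n. -/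
open Filter Topology MeasureTheory ENNReal Set
open scoped Classical

noncomputable section Aux

namespace StmtAux

variable {V : Type*} [AddCommGroup V] [Module ℝ V]

/-- The decomposition-value set defining the K-functional. -/
def KD (S0 S1 : QuasiNormedSpaceOn V) (t : ℝ) (x : V) : Set ℝ :=
  {r : ℝ | ∃ b0 ∈ (S0.carrier : Set V), ∃ b1 ∈ (S1.carrier : Set V),
    x = b0 + b1 ∧ r = S0.nrm b0 + t * S1.nrm b1}

variable (S0 S1 : QuasiNormedSpaceOn V)

lemma Kfun_eq_sInf (t : ℝ) (x : V) : Kfun S0 S1 t x = sInf (KD S0 S1 t x) := rfl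

lemma KD_nonneg {t : ℝ} (ht : 0 ≤ t) (x : V) : ∀ r ∈ KD S0 S1 t x, (0:ℝ) ≤ r := by
  rintro r ⟨b0, h0, b1, h1, hx, rfl⟩
  have := S0.nrm_nonneg b0
  have := S1.nrm_nonneg b1
  positivity

lemma KD_bddBelow {t : ℝ} (ht : 0 ≤ t) (x : V) : BddBelow (KD S0 S1 t x) :=
  ⟨0, fun r hr => KD_nonneg S0 S1 ht x r hr⟩

lemma KD_nonempty {x : V} (hx : x ∈ csum S0 S1) (t : ℝ) : (KD S0 S1 t x).Nonempty := by
  obtain ⟨b0, h0, b1, h1, hx⟩ := hx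
  exact ⟨_, b0, h0, b1, h1, hx, rfl⟩

lemma mem_csum_of_KD_nonempty {x : V} {t : ℝ} (h : (KD S0 S1 t x).Nonempty) :
    x ∈ csum S0 S1 := by
  obtain ⟨r, b0, h0, b1, h1, hx, -⟩ := h
  exact ⟨b0, h0, b1, h1, hx⟩

lemma Kfun_nonneg {t : ℝ} (ht : 0 ≤ t) (x : V) : 0 ≤ Kfun S0 S1 t x :=
  Real.sInf_nonneg (KD_nonneg S0 S1 ht x)

lemma Kfun_le {t : ℝ} (ht : 0 ≤ t) {x b0 b1 : V} (h0 : b0 ∈ S0.carrier)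
    (h1 : b1 ∈ S1.carrier) (hx : x = b0 + b1) :
    Kfun S0 S1 t x ≤ S0.nrm b0 + t * S1.nrm b1 :=
  csInf_le (KD_bddBelow S0 S1 ht x) ⟨b0, h0, b1, h1, hx, rfl⟩

lemma exists_decomp_lt {t : ℝ} {x : V} (hx : x ∈ csum S0 S1) {r : ℝ}
    (hr : Kfun S0 S1 t x < r) :
    ∃ b0 ∈ (S0.carrier : Set V), ∃ b1 ∈ (S1.carrier : Set V),
      x = b0 + b1 ∧ S0.nrm b0 + t * S1.nrm b1 < r := by
  obtain ⟨v, hv, hvr⟩ := exists_lt_of_csInf_lt (KD_nonempty S0 S1 hx t) hr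
  obtain ⟨b0, h0, b1, h1, hxd, rfl⟩ := hv
  exact ⟨b0, h0, b1, h1, hxd, hvr⟩

lemma Kfun_mono {s t : ℝ} (hs : 0 ≤ s) (hst : s ≤ t) (x : V) :
    Kfun S0 S1 s x ≤ Kfun S0 S1 t x := by
  rcases Set.eq_empty_or_nonempty (KD S0 S1 t x) with he | hne
  · have he' : KD S0 S1 s x = ∅ := by
      rcases Set.eq_empty_or_nonempty (KD S0 S1 s x) with h | h
      · exact h
      · exact absurd (KD_nonempty S0 S1 (mem_csum_of_KD_nonempty S0 S1 h) t)
          (by rw [he]; exact Set.not_nonempty_empty)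
    rw [Kfun_eq_sInf, Kfun_eq_sInf, he, he']
  · rw [Kfun_eq_sInf, Kfun_eq_sInf]
    refine le_csInf hne ?_
    rintro r ⟨b0, h0, b1, h1, hx, rfl⟩
    calc sInf (KD S0 S1 s x) ≤ S0.nrm b0 + s * S1.nrm b1 :=
          csInf_le (KD_bddBelow S0 S1 hs x) ⟨b0, h0, b1, h1, hx, rfl⟩
      _ ≤ S0.nrm b0 + t * S1.nrm b1 := by
          have := S1.nrm_nonneg b1; nlinarith

lemma Kfun_le_max_one_mul {t : ℝ} (ht : 0 ≤ t) (x : V) :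
    Kfun S0 S1 t x ≤ max 1 t * Kfun S0 S1 1 x := by
  rcases Set.eq_empty_or_nonempty (KD S0 S1 1 x) with he | hne
  · have he' : KD S0 S1 t x = ∅ := by
      rcases Set.eq_empty_or_nonempty (KD S0 S1 t x) with h | h
      · exact h
      · exact absurd (KD_nonempty S0 S1 (mem_csum_of_KD_nonempty S0 S1 h) 1)
          (by rw [he]; exact Set.not_nonempty_empty)
    rw [Kfun_eq_sInf, Kfun_eq_sInf, he, he', Real.sInf_empty]
    norm_num
  · have hm : (0:ℝ) < max 1 t := lt_of_lt_of_le one_pos (le_max_left _ _)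
    rw [Kfun_eq_sInf, show Kfun S0 S1 1 x = sInf (KD S0 S1 1 x) from rfl]
    rw [← div_le_iff₀' hm]
    refine le_csInf hne ?_
    rintro r ⟨b0, h0, b1, h1, hx, rfl⟩
    rw [div_le_iff₀' hm]
    calc sInf (KD S0 S1 t x) ≤ S0.nrm b0 + t * S1.nrm b1 :=
          csInf_le (KD_bddBelow S0 S1 ht x) ⟨b0, h0, b1, h1, hx, rfl⟩
      _ ≤ max 1 t * (S0.nrm b0 + 1 * S1.nrm b1) := by
          have h0' := S0.nrm_nonneg b0
          have h1' := S1.nrm_nonneg b1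
          have := le_max_left (1:ℝ) t
          have := le_max_right (1:ℝ) t
          nlinarith

lemma Kfun_smul_le {t : ℝ} (ht : 0 ≤ t) {ρ : ℝ} (hρ : ρ ≠ 0) (x : V) :
    Kfun S0 S1 t (ρ • x) ≤ |ρ| * Kfun S0 S1 t x := by
  rcases Set.eq_empty_or_nonempty (KD S0 S1 t x) with he | hne
  · have he' : KD S0 S1 t (ρ • x) = ∅ := by
      rcases Set.eq_empty_or_nonempty (KD S0 S1 t (ρ • x)) with h | h
      · exact h
      · exfalso
        obtain ⟨b0, h0, b1, h1, hx⟩ := mem_csum_of_KD_nonempty S0 S1 h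
        have hx' : x = ρ⁻¹ • b0 + ρ⁻¹ • b1 := by
          have : ρ⁻¹ • (ρ • x) = ρ⁻¹ • (b0 + b1) := by rw [hx]
          rwa [smul_smul, inv_mul_cancel₀ hρ, one_smul, smul_add] at this
        have : (KD S0 S1 t x).Nonempty :=
          KD_nonempty S0 S1 ⟨ρ⁻¹ • b0, S0.carrier.smul_mem _ h0,
            ρ⁻¹ • b1, S1.carrier.smul_mem _ h1, hx'⟩ t
        rw [he] at this; exact Set.not_nonempty_empty this
    rw [Kfun_eq_sInf, Kfun_eq_sInf, he, he', Real.sInf_empty]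
    norm_num
  · have hρ' : (0:ℝ) < |ρ| := abs_pos.mpr hρ
    rw [Kfun_eq_sInf, show Kfun S0 S1 t x = sInf (KD S0 S1 t x) from rfl,
      ← div_le_iff₀' hρ']
    refine le_csInf hne ?_
    rintro r ⟨b0, h0, b1, h1, hx, rfl⟩
    rw [div_le_iff₀' hρ']
    calc sInf (KD S0 S1 t (ρ • x)) ≤ S0.nrm (ρ • b0) + t * S1.nrm (ρ • b1) :=
          csInf_le (KD_bddBelow S0 S1 ht _)
            ⟨ρ • b0, S0.carrier.smul_mem _ h0, ρ • b1, S1.carrier.smul_mem _ h1,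
              by rw [hx, smul_add], rfl⟩
      _ = |ρ| * (S0.nrm b0 + t * S1.nrm b1) := by
          rw [S0.nrm_smul ρ b0 h0, S1.nrm_smul ρ b1 h1]; ring

lemma Kfun_smul {t : ℝ} (ht : 0 ≤ t) {ρ : ℝ} (hρ : ρ ≠ 0) (x : V) :
    Kfun S0 S1 t (ρ • x) = |ρ| * Kfun S0 S1 t x := by
  refine le_antisymm (Kfun_smul_le S0 S1 ht hρ x) ?_
  have h2 := Kfun_smul_le S0 S1 ht (inv_ne_zero hρ) (ρ • x)
  rw [smul_smul, inv_mul_cancel₀ hρ, one_smul, abs_inv] at h2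
  have hρ' : (0:ℝ) < |ρ| := abs_pos.mpr hρ
  calc |ρ| * Kfun S0 S1 t x ≤ |ρ| * (|ρ|⁻¹ * Kfun S0 S1 t (ρ • x)) := by
        exact mul_le_mul_of_nonneg_left h2 (le_of_lt hρ')
    _ = Kfun S0 S1 t (ρ • x) := by field_simp

lemma Kfun_neg {t : ℝ} (ht : 0 ≤ t) (x : V) :
    Kfun S0 S1 t (-x) = Kfun S0 S1 t x := by
  have := Kfun_smul S0 S1 ht (by norm_num : (-1:ℝ) ≠ 0) x
  rwa [neg_one_smul, abs_neg, abs_one, one_mul] at this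

lemma zero_mem_csum : (0:V) ∈ csum S0 S1 :=
  ⟨0, S0.carrier.zero_mem, 0, S1.carrier.zero_mem, by simp⟩

lemma add_mem_csum {x y : V} (hx : x ∈ csum S0 S1) (hy : y ∈ csum S0 S1) :
    x + y ∈ csum S0 S1 := by
  obtain ⟨a0, ha0, a1, ha1, rfl⟩ := hx
  obtain ⟨b0, hb0, b1, hb1, rfl⟩ := hy
  exact ⟨a0 + b0, S0.carrier.add_mem ha0 hb0, a1 + b1, S1.carrier.add_mem ha1 hb1,
    by abel⟩

lemma smul_mem_csum (ρ : ℝ) {x : V} (hx : x ∈ csum S0 S1) : ρ • x ∈ csum S0 S1 := by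
  obtain ⟨a0, ha0, a1, ha1, rfl⟩ := hx
  exact ⟨ρ • a0, S0.carrier.smul_mem _ ha0, ρ • a1, S1.carrier.smul_mem _ ha1,
    by rw [smul_add]⟩

lemma nrm0_zero : S0.nrm 0 = 0 := (S0.nrm_eq_zero 0 S0.carrier.zero_mem).mpr rfl

lemma Kfun_zero {t : ℝ} (ht : 0 ≤ t) : Kfun S0 S1 t (0:V) = 0 := by
  refine le_antisymm ?_ (Kfun_nonneg S0 S1 ht 0)
  have := Kfun_le S0 S1 ht S0.carrier.zero_mem S1.carrier.zero_mem
    (show (0:V) = 0 + 0 by simp)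
  rwa [nrm0_zero, nrm0_zero, mul_zero, add_zero] at this

lemma Kfun_add_le {t : ℝ} (ht : 0 ≤ t) {x y : V} (hx : x ∈ csum S0 S1)
    (hy : y ∈ csum S0 S1) :
    Kfun S0 S1 t (x + y) ≤ max S0.qc S1.qc * (Kfun S0 S1 t x + Kfun S0 S1 t y) := by
  set Q := max S0.qc S1.qc with hQdef
  have hQ1 : (1:ℝ) ≤ Q := le_trans S0.one_le_qc (le_max_left _ _)
  have hQ0 : (0:ℝ) < Q := lt_of_lt_of_le one_pos hQ1
  refine le_of_forall_pos_le_add ?_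
  intro δ hδ
  have hδ' : 0 < δ / (2 * Q) := by positivity
  obtain ⟨a0, ha0, a1, ha1, hxd, hxv⟩ := exists_decomp_lt S0 S1 hx
    (lt_add_of_pos_right (Kfun S0 S1 t x) hδ')
  obtain ⟨b0, hb0, b1, hb1, hyd, hyv⟩ := exists_decomp_lt S0 S1 hy
    (lt_add_of_pos_right (Kfun S0 S1 t y) hδ')
  have hdec : x + y = (a0 + b0) + (a1 + b1) := by rw [hxd, hyd]; abel
  have hK := Kfun_le S0 S1 ht (S0.carrier.add_mem ha0 hb0)
    (S1.carrier.add_mem ha1 hb1) hdec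
  have h0 : S0.nrm (a0 + b0) ≤ S0.qc * (S0.nrm a0 + S0.nrm b0) :=
    S0.quasi_triangle a0 ha0 b0 hb0
  have h1 : S1.nrm (a1 + b1) ≤ S1.qc * (S1.nrm a1 + S1.nrm b1) :=
    S1.quasi_triangle a1 ha1 b1 hb1
  have hq0 : S0.qc ≤ Q := le_max_left _ _
  have hq1 : S1.qc ≤ Q := le_max_right _ _
  have hn0a := S0.nrm_nonneg a0
  have hn0b := S0.nrm_nonneg b0
  have hn1a := S1.nrm_nonneg a1
  have hn1b := S1.nrm_nonneg b1
  have h1' : t * S1.nrm (a1 + b1) ≤ Q * (t * S1.nrm a1 + t * S1.nrm b1) := by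
    have A : t * S1.nrm (a1 + b1) ≤ t * (S1.qc * (S1.nrm a1 + S1.nrm b1)) :=
      mul_le_mul_of_nonneg_left h1 ht
    have B : S1.qc * (t * (S1.nrm a1 + S1.nrm b1)) ≤ Q * (t * (S1.nrm a1 + S1.nrm b1)) :=
      mul_le_mul_of_nonneg_right hq1 (by positivity)
    nlinarith [A, B]
  have h0' : S0.nrm (a0 + b0) ≤ Q * (S0.nrm a0 + S0.nrm b0) := by nlinarith
  calc Kfun S0 S1 t (x + y) ≤ S0.nrm (a0 + b0) + t * S1.nrm (a1 + b1) := hK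
    _ ≤ Q * ((S0.nrm a0 + t * S1.nrm a1) + (S0.nrm b0 + t * S1.nrm b1)) := by
        nlinarith
    _ ≤ Q * ((Kfun S0 S1 t x + δ / (2*Q)) + (Kfun S0 S1 t y + δ / (2*Q))) := by
        have := le_of_lt hxv; have := le_of_lt hyv; nlinarith
    _ = Q * (Kfun S0 S1 t x + Kfun S0 S1 t y) + δ := by field_simp; ring

end StmtAux

end Aux

noncomputable section Aux2

namespace StmtAux

variable {V : Type*} [AddCommGroup V] [Module ℝ V]

lemma geom_bound {x : ℝ} (hx0 : 0 ≤ x) (hx : x ≤ 1/2) (m : ℕ) :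
    ∑ i ∈ Finset.range m, x ^ i ≤ 2 := by
  induction m with
  | zero => simp
  | succ m ih =>
    rw [Finset.sum_range_succ']
    have h : ∑ i ∈ Finset.range m, x ^ (i + 1) = x * ∑ i ∈ Finset.range m, x ^ i := by
      rw [Finset.mul_sum]
      exact Finset.sum_congr rfl (fun i _ => by ring)
    rw [h]
    have hs : 0 ≤ ∑ i ∈ Finset.range m, x ^ i :=
      Finset.sum_nonneg (fun i _ => pow_nonneg hx0 i)
    have : x * ∑ i ∈ Finset.range m, x ^ i ≤ (1/2) * 2 := by
      apply mul_le_mul hx ih hs; norm_num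
    simp only [pow_zero]
    linarith

lemma nrm_sum_le (S : QuasiNormedSpaceOn V) {Q : ℝ} (hQ : S.qc ≤ Q) :
    ∀ (m : ℕ) (g : ℕ → V), (∀ i, g i ∈ S.carrier) →
      S.nrm (∑ i ∈ Finset.range m, g i) ≤ ∑ i ∈ Finset.range m, Q ^ (i+1) * S.nrm (g i) := by
  have hQ1 : (1:ℝ) ≤ Q := le_trans S.one_le_qc hQ
  have hQ0 : (0:ℝ) < Q := lt_of_lt_of_le one_pos hQ1
  intro m
  induction m with
  | zero =>
    intro g hg
    simp [(S.nrm_eq_zero 0 S.carrier.zero_mem).mpr rfl]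
  | succ m ih =>
    intro g hg
    rw [Finset.sum_range_succ' g m, Finset.sum_range_succ' (fun i => Q ^ (i+1) * S.nrm (g i)) m]
    have hmem : ∀ i, g (i+1) ∈ S.carrier := fun i => hg (i+1)
    have hsum : (∑ i ∈ Finset.range m, g (i+1)) ∈ S.carrier :=
      Submodule.sum_mem _ (fun i _ => hmem i)
    have h1 := S.quasi_triangle _ hsum (g 0) (hg 0)
    have h2 := ih (fun i => g (i+1)) hmem
    have hT0 : (0:ℝ) ≤ ∑ i ∈ Finset.range m, Q ^ (i+1) * S.nrm (g (i+1)) :=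
      Finset.sum_nonneg (fun i _ => mul_nonneg (pow_nonneg (le_of_lt hQ0) _) (S.nrm_nonneg _))
    have ha0 : 0 ≤ S.nrm (∑ i ∈ Finset.range m, g (i+1)) := S.nrm_nonneg _
    have hb0 : 0 ≤ S.nrm (g 0) := S.nrm_nonneg _
    have hQT : Q * ∑ i ∈ Finset.range m, Q ^ (i+1) * S.nrm (g (i+1))
        = ∑ i ∈ Finset.range m, Q ^ (i+1+1) * S.nrm (g (i+1)) := by
      rw [Finset.mul_sum]
      exact Finset.sum_congr rfl (fun i _ => by ring)
    have hqc : S.nrm ((∑ i ∈ Finset.range m, g (i+1)) + g 0)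
        ≤ Q * (S.nrm (∑ i ∈ Finset.range m, g (i+1)) + S.nrm (g 0)) := by
      nlinarith
    calc S.nrm ((∑ i ∈ Finset.range m, g (i+1)) + g 0)
        ≤ Q * (S.nrm (∑ i ∈ Finset.range m, g (i+1)) + S.nrm (g 0)) := hqc
      _ ≤ Q * ((∑ i ∈ Finset.range m, Q ^ (i+1) * S.nrm (g (i+1))) + S.nrm (g 0)) := by
          nlinarith
      _ = (∑ i ∈ Finset.range m, Q ^ (i+1+1) * S.nrm (g (i+1))) + Q ^ (0+1) * S.nrm (g 0) := by
          rw [← hQT]; ring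

lemma nrm_neg_eq (S : QuasiNormedSpaceOn V) {z : V} (hz : z ∈ S.carrier) :
    S.nrm (-z) = S.nrm z := by
  have h := S.nrm_smul (-1) z hz
  rwa [neg_one_smul, abs_neg, abs_one, one_mul] at h

lemma nrm_lim_le (S : QuasiNormedSpaceOn V) {f : ℕ → V} {x : V}
    (hf : ∀ k, f k ∈ S.carrier) (hx : x ∈ S.carrier)
    (hlim : Filter.Tendsto (fun k => S.nrm (f k - x)) Filter.atTop (nhds 0))
    {j : ℕ} {b : ℝ} (hbd : ∀ k, j ≤ k → S.nrm (f k - f j) ≤ b) :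
    S.nrm (x - f j) ≤ S.qc * b := by
  have hq : 0 < S.qc := lt_of_lt_of_le one_pos S.one_le_qc
  refine le_of_forall_pos_le_add ?_
  intro δ hδ
  have hev : ∀ᶠ k in Filter.atTop, S.nrm (f k - x) < δ / S.qc := by
    have := hlim.eventually (gt_mem_nhds (show (0:ℝ) < δ / S.qc by positivity))
    exact this
  obtain ⟨k, hk1, hk2⟩ := (hev.and (Filter.eventually_ge_atTop j)).exists
  have hxk : x - f j = (x - f k) + (f k - f j) := by abel
  have h1 := S.quasi_triangle (x - f k) (Submodule.sub_mem _ hx (hf k))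
    (f k - f j) (Submodule.sub_mem _ (hf k) (hf j))
  have hneg : S.nrm (x - f k) = S.nrm (f k - x) := by
    rw [show x - f k = -(f k - x) by abel]
    exact nrm_neg_eq S (Submodule.sub_mem _ (hf k) hx)
  have hb2 := hbd k hk2
  calc S.nrm (x - f j) = S.nrm ((x - f k) + (f k - f j)) := by rw [← hxk]
    _ ≤ S.qc * (S.nrm (x - f k) + S.nrm (f k - f j)) := h1
    _ ≤ S.qc * (δ / S.qc + b) := by
        rw [hneg] at *
        have := le_of_lt hk1
        nlinarith [S.nrm_nonneg (f k - x), S.nrm_nonneg (f k - f j)]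
    _ = S.qc * b + δ := by field_simp; ring

variable (S0 S1 : QuasiNormedSpaceOn V)

lemma sphere_bddAbove {t : ℝ} (ht : 0 ≤ t) :
    BddAbove (Kfun S0 S1 t '' sumSphere S0 S1) := by
  refine ⟨max 1 t, ?_⟩
  rintro r ⟨a, ⟨hmem, hnorm⟩, rfl⟩
  have := Kfun_le_max_one_mul S0 S1 ht a
  rw [show Kfun S0 S1 1 a = sumNorm S0 S1 a from rfl, hnorm, mul_one] at this
  exact this

lemma exists_sphere_gt {t c : ℝ} (ht : 0 ≤ t) (hc : 0 < c)
    (h : c < KSet S0 S1 t (sumSphere S0 S1)) :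
    ∃ u ∈ sumSphere S0 S1, c < Kfun S0 S1 t u := by
  have hne : (Kfun S0 S1 t '' sumSphere S0 S1).Nonempty := by
    by_contra hemp
    rw [Set.not_nonempty_iff_eq_empty] at hemp
    rw [KSet, hemp, Real.sSup_empty] at h
    linarith
  obtain ⟨r, hr, hcr⟩ := exists_lt_of_lt_csSup hne h
  obtain ⟨u, hu, rfl⟩ := hr
  exact ⟨u, hu, hcr⟩

lemma KSet_le {t b : ℝ} (hb : 0 ≤ b)
    (h : ∀ a ∈ sumSphere S0 S1, Kfun S0 S1 t a ≤ b) :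
    KSet S0 S1 t (sumSphere S0 S1) ≤ b := by
  refine Real.sSup_le ?_ hb
  rintro r ⟨a, ha, rfl⟩
  exact h a ha

lemma unit_decomp {u : V} (hu : u ∈ sumSphere S0 S1) :
    ∃ a ∈ (S0.carrier : Set V), ∃ b ∈ (S1.carrier : Set V),
      u = a + b ∧ S0.nrm a + S1.nrm b ≤ 2 := by
  obtain ⟨hmem, hnorm⟩ := hu
  have h2 : Kfun S0 S1 1 u < 2 := by
    rw [show Kfun S0 S1 1 u = sumNorm S0 S1 u from rfl, hnorm]; norm_num
  obtain ⟨a, ha, b, hb, hd, hv⟩ := exists_decomp_lt S0 S1 hmem h2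
  rw [one_mul] at hv
  exact ⟨a, ha, b, hb, hd, le_of_lt hv⟩

end StmtAux

end Aux2

noncomputable section Aux3

namespace StmtAux

variable {V : Type*} [AddCommGroup V] [Module ℝ V]

lemma backward (S0 S1 : QuasiNormedSpaceOn V)
    (hb : ∀ ε t : ℕ → ℝ,
      (∀ n, 0 < ε n) → (∀ n, ε (n+1) ≤ ε n) → Filter.Tendsto ε Filter.atTop (nhds 0) →
      (∀ n, 0 < t n) → (∀ n, t (n+1) ≤ t n) → Filter.Tendsto t Filter.atTop (nhds 0) →
      ∃ x ∈ csum S0 S1, ¬ ∃ C : ℝ, 0 < C ∧ ∀ n : ℕ, Kfun S0 S1 (t n) x ≤ C * ε n) :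
    ∃ c : ℝ, 0 < c ∧ ∀ t : ℝ, 0 < t → c < KSet S0 S1 t (sumSphere S0 S1) := by
  by_contra hna
  push_neg at hna
  choose s hs1 hs2 using fun n : ℕ => hna (1/((n:ℝ)+1)) (by positivity)
  set T : ℕ → ℝ := fun n =>
    min (1/((n:ℝ)+1)) ((Finset.range (n+1)).inf' Finset.nonempty_range_add_one s) with hT
  have Tpos : ∀ n, 0 < T n := by
    intro n
    refine lt_min (by positivity) ?_
    rw [Finset.lt_inf'_iff]
    exact fun i _ => hs1 i
  have Tanti : ∀ n, T (n+1) ≤ T n := by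
    intro n
    refine min_le_min ?_ ?_
    · apply one_div_le_one_div_of_le (by positivity); push_cast; linarith
    · exact Finset.inf'_mono s (Finset.range_subset_range.mpr (by omega)) _
  have TleS : ∀ n, T n ≤ s n := fun n =>
    le_trans (min_le_right _ _) (Finset.inf'_le s (Finset.self_mem_range_succ n))
  have Ttend : Filter.Tendsto T Filter.atTop (nhds 0) := by
    refine squeeze_zero (fun n => le_of_lt (Tpos n)) (fun n => min_le_left _ _) ?_
    exact tendsto_one_div_add_atTop_nhds_zero_nat
  have εpos : ∀ n : ℕ, (0:ℝ) < 1/((n:ℝ)+1) := fun n => by positivity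
  obtain ⟨x, hx, hnC⟩ := hb (fun n => 1/((n:ℝ)+1)) T εpos
    (fun n => by apply one_div_le_one_div_of_le (by positivity); push_cast; linarith)
    tendsto_one_div_add_atTop_nhds_zero_nat Tpos Tanti Ttend
  apply hnC
  set ρ := sumNorm S0 S1 x with hρ
  have hρ0 : 0 ≤ ρ := Kfun_nonneg S0 S1 zero_le_one x
  refine ⟨max ρ 1, lt_of_lt_of_le one_pos (le_max_right _ _), ?_⟩
  intro n
  have hTn := Tpos n
  have hεn := εpos n
  rcases eq_or_lt_of_le hρ0 with hρz | hρp
  · have h1 : Kfun S0 S1 (T n) x ≤ max 1 (T n) * ρ :=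
      Kfun_le_max_one_mul S0 S1 (le_of_lt hTn) x
    rw [← hρz, mul_zero] at h1
    have : (0:ℝ) ≤ max ρ 1 * (1/((n:ℝ)+1)) := by positivity
    linarith
  · set y := ρ⁻¹ • x with hy
    have hyc : y ∈ csum S0 S1 := smul_mem_csum S0 S1 _ hx
    have hynorm : sumNorm S0 S1 y = 1 := by
      have h := Kfun_smul S0 S1 zero_le_one (inv_ne_zero (ne_of_gt hρp)) x
      rw [show sumNorm S0 S1 y = Kfun S0 S1 1 y from rfl, hy, h,
        abs_of_pos (inv_pos.mpr hρp), show Kfun S0 S1 1 x = ρ from rfl]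
      field_simp
    have hysph : y ∈ sumSphere S0 S1 := ⟨hyc, hynorm⟩
    have h1 : Kfun S0 S1 (T n) y ≤ KSet S0 S1 (T n) (sumSphere S0 S1) :=
      le_csSup (sphere_bddAbove S0 S1 (le_of_lt hTn)) ⟨y, hysph, rfl⟩
    have h2 : KSet S0 S1 (T n) (sumSphere S0 S1) ≤ 1/((n:ℝ)+1) := by
      refine Real.sSup_le ?_ (by positivity)
      rintro r ⟨a, ha, rfl⟩
      calc Kfun S0 S1 (T n) a ≤ Kfun S0 S1 (s n) a :=
            Kfun_mono S0 S1 (le_of_lt hTn) (TleS n) a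
        _ ≤ KSet S0 S1 (s n) (sumSphere S0 S1) :=
            le_csSup (sphere_bddAbove S0 S1 (le_of_lt (hs1 n))) ⟨a, ha, rfl⟩
        _ ≤ 1/((n:ℝ)+1) := hs2 n
    have hxy : x = ρ • y := by
      rw [hy, smul_smul, mul_inv_cancel₀ (ne_of_gt hρp), one_smul]
    have h3 : Kfun S0 S1 (T n) x = ρ * Kfun S0 S1 (T n) y := by
      conv_lhs => rw [hxy]
      rw [Kfun_smul S0 S1 (le_of_lt hTn) (ne_of_gt hρp) y, abs_of_pos hρp]
    rw [h3]
    have h4 : ρ * Kfun S0 S1 (T n) y ≤ ρ * (1/((n:ℝ)+1)) :=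
      mul_le_mul_of_nonneg_left (le_trans h1 h2) (le_of_lt hρp)
    have h5 : ρ * (1/((n:ℝ)+1)) ≤ max ρ 1 * (1/((n:ℝ)+1)) :=
      mul_le_mul_of_nonneg_right (le_max_left _ _) (by positivity)
    linarith

end StmtAux

end Aux3

noncomputable section Aux4

namespace StmtAux

variable {V : Type*} [AddCommGroup V] [Module ℝ V]

set_option maxHeartbeats 1600000 in
lemma forward (S0 S1 : QuasiNormedSpaceOn V)
    (ha : ∃ c : ℝ, 0 < c ∧ ∀ t : ℝ, 0 < t → c < KSet S0 S1 t (sumSphere S0 S1)) :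
    ∀ ε t : ℕ → ℝ,
      (∀ n, 0 < ε n) → (∀ n, ε (n+1) ≤ ε n) → Filter.Tendsto ε Filter.atTop (nhds 0) →
      (∀ n, 0 < t n) → (∀ n, t (n+1) ≤ t n) → Filter.Tendsto t Filter.atTop (nhds 0) →
      ∃ x ∈ csum S0 S1, ¬ ∃ C : ℝ, 0 < C ∧ ∀ n : ℕ, Kfun S0 S1 (t n) x ≤ C * ε n := by
  obtain ⟨c, hc, hKS⟩ := ha
  intro ε t hε hεanti hεtend ht htanti httend
  by_contra hcon
  push_neg at hcon
  -- hcon : ∀ x ∈ csum S0 S1, ∃ C, 0 < C ∧ ∀ n, Kfun S0 S1 (t n) x ≤ C * ε n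
  have htmono : ∀ n, t n ≤ t 0 := fun n => antitone_nat_of_succ_le htanti (Nat.zero_le n)
  set Q : ℝ := max S0.qc S1.qc with hQdef
  have hQ1 : (1:ℝ) ≤ Q := le_trans S0.one_le_qc (le_max_left _ _)
  have hQ0 : (0:ℝ) < Q := lt_of_lt_of_le one_pos hQ1
  set M : ℝ := max 1 (t 0) with hMdef
  have hM1 : (1:ℝ) ≤ M := le_max_left _ _
  have hM0 : (0:ℝ) < M := lt_of_lt_of_le one_pos hM1
  have htM : t 0 ≤ M := le_max_right _ _
  set γ : ℝ := min (1/(2*Q)) (c/(32*Q^4*M)) with hγdef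
  have hγ0 : (0:ℝ) < γ := lt_min (by positivity) (by positivity)
  have hγQ : Q * γ ≤ 1/2 := by
    have h := min_le_left (1/(2*Q)) (c/(32*Q^4*M))
    rw [← hγdef] at h
    rw [show (1:ℝ)/2 = Q * (1/(2*Q)) by field_simp]
    exact mul_le_mul_of_nonneg_left h (le_of_lt hQ0)
  have hγc : 8*Q^2*M*γ ≤ c/(4*Q^2) := by
    have h := min_le_right (1/(2*Q)) (c/(32*Q^4*M))
    rw [← hγdef] at h
    have h2 : 8*Q^2*M*γ ≤ 8*Q^2*M*(c/(32*Q^4*M)) :=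
      mul_le_mul_of_nonneg_left h (by positivity)
    have h3 : 8*Q^2*M*(c/(32*Q^4*M)) = c/(4*Q^2) := by field_simp; ring
    linarith
  have hγ1 : γ < 1 := by
    have h := min_le_left (1/(2*Q)) (c/(32*Q^4*M))
    rw [← hγdef] at h
    have : 1/(2*Q) ≤ 1/2 := by
      apply one_div_le_one_div_of_le (by norm_num) (by linarith)
    linarith
  -- the choice function
  have EX : ∀ (j : ℕ) (s : V), ∃ p : ℕ × V × V, s ∈ csum S0 S1 →
      (p.2.1 ∈ S0.carrier ∧ p.2.2 ∈ S1.carrier ∧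
        S0.nrm p.2.1 + S1.nrm p.2.2 ≤ 2 ∧ sumNorm S0 S1 (p.2.1 + p.2.2) = 1 ∧
        c < Kfun S0 S1 (t p.1) (p.2.1 + p.2.2) ∧
        Kfun S0 S1 (t p.1) s ≤ γ^j * (c/(4*Q^2)) ∧
        ε p.1 ≤ γ^j * (c/(2*Q*((j:ℝ)+1)))) := by
    intro j s
    by_cases hs : s ∈ csum S0 S1
    · obtain ⟨Cs, hCs, hCsle⟩ := hcon s hs
      have hev : ∀ᶠ n in Filter.atTop,
          ε n < min (γ^j * (c/(4*Q^2)) / Cs) (γ^j * (c/(2*Q*((j:ℝ)+1)))) :=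
        hεtend.eventually (gt_mem_nhds (lt_min (by positivity) (by positivity)))
      obtain ⟨n, hn⟩ := hev.exists
      obtain ⟨u, husph, hugt⟩ := exists_sphere_gt S0 S1 (le_of_lt (ht n)) hc (hKS (t n) (ht n))
      obtain ⟨a, haC, b, hbC, hdecomp, hval⟩ := unit_decomp S0 S1 husph
      refine ⟨(n, a, b), fun _ => ⟨haC, hbC, hval, by rw [← hdecomp]; exact husph.2,
        by rw [← hdecomp]; exact hugt, ?_, ?_⟩⟩
      · have h1 : ε n ≤ γ^j * (c/(4*Q^2)) / Cs :=
          le_of_lt (lt_of_lt_of_le hn (min_le_left _ _))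
        calc Kfun S0 S1 (t n) s ≤ Cs * ε n := hCsle n
          _ ≤ Cs * (γ^j * (c/(4*Q^2)) / Cs) := mul_le_mul_of_nonneg_left h1 (le_of_lt hCs)
          _ = γ^j * (c/(4*Q^2)) := by rw [mul_comm]; exact div_mul_cancel₀ _ (ne_of_gt hCs)
      · exact le_of_lt (lt_of_lt_of_le hn (min_le_right _ _))
    · exact ⟨(0, 0, 0), fun h => absurd h hs⟩
  choose pick hpick using EX
  obtain ⟨F, hF0, hFs⟩ : ∃ F : ℕ → V, F 0 = 0 ∧
      ∀ j, F (j+1) = F j + γ^j • ((pick j (F j)).2.1 + (pick j (F j)).2.2) :=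
    ⟨fun j => Nat.rec 0 (fun j s => s + γ^j • ((pick j s).2.1 + (pick j s).2.2)) j,
      rfl, fun j => rfl⟩
  have hFc : ∀ j, F j ∈ csum S0 S1 := by
    intro j
    induction j with
    | zero => rw [hF0]; exact zero_mem_csum S0 S1
    | succ j ihj =>
      rw [hFs j]
      obtain ⟨h1, h2, -⟩ := hpick j (F j) ihj
      exact add_mem_csum S0 S1 ihj (smul_mem_csum S0 S1 _ ⟨_, h1, _, h2, rfl⟩)
  have hP := fun j => hpick j (F j) (hFc j)
  have haC : ∀ j, (pick j (F j)).2.1 ∈ S0.carrier := fun j => (hP j).1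
  have hbC : ∀ j, (pick j (F j)).2.2 ∈ S1.carrier := fun j => (hP j).2.1
  have haN : ∀ j, S0.nrm (pick j (F j)).2.1 ≤ 2 := fun j => by
    have := (hP j).2.2.1; have := S1.nrm_nonneg (pick j (F j)).2.2; linarith
  have hbN : ∀ j, S1.nrm (pick j (F j)).2.2 ≤ 2 := fun j => by
    have := (hP j).2.2.1; have := S0.nrm_nonneg (pick j (F j)).2.1; linarith
  have hKgt : ∀ j, c < Kfun S0 S1 (t (pick j (F j)).1)
      ((pick j (F j)).2.1 + (pick j (F j)).2.2) := fun j => (hP j).2.2.2.2.1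
  have hKFj : ∀ j, Kfun S0 S1 (t (pick j (F j)).1) (F j) ≤ γ^j * (c/(4*Q^2)) :=
    fun j => (hP j).2.2.2.2.2.1
  have hεn : ∀ j, ε (pick j (F j)).1 ≤ γ^j * (c/(2*Q*((j:ℝ)+1))) :=
    fun j => (hP j).2.2.2.2.2.2
  -- partial sums in A0 and A1
  set Pa : ℕ → V := fun m => ∑ i ∈ Finset.range m, γ^i • (pick i (F i)).2.1 with hPa
  set Pb : ℕ → V := fun m => ∑ i ∈ Finset.range m, γ^i • (pick i (F i)).2.2 with hPb
  have hPaC : ∀ m, Pa m ∈ S0.carrier := fun m =>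
    Submodule.sum_mem _ (fun i _ => Submodule.smul_mem _ _ (haC i))
  have hPbC : ∀ m, Pb m ∈ S1.carrier := fun m =>
    Submodule.sum_mem _ (fun i _ => Submodule.smul_mem _ _ (hbC i))
  have hFP : ∀ m, F m = Pa m + Pb m := by
    intro m
    induction m with
    | zero => rw [hF0]; simp [hPa, hPb]
    | succ m ihm =>
      have ePa : Pa (m+1) = Pa m + γ^m • (pick m (F m)).2.1 := by
        simp only [hPa]; exact Finset.sum_range_succ _ m
      have ePb : Pb (m+1) = Pb m + γ^m • (pick m (F m)).2.2 := by
        simp only [hPb]; exact Finset.sum_range_succ _ m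
      rw [hFs m, ePa, ePb, smul_add, ihm]
      abel
  -- Cauchy estimates
  have key : ∀ (S : QuasiNormedSpaceOn V) (hSq : S.qc ≤ Q) (g : ℕ → V)
      (hg : ∀ i, g i ∈ S.carrier) (hgN : ∀ i, S.nrm (g i) ≤ 2) (j k : ℕ), j ≤ k →
      S.nrm ((∑ i ∈ Finset.range k, γ^i • g i) - ∑ i ∈ Finset.range j, γ^i • g i)
        ≤ 4*Q*γ^j := by
    intro S hSq g hg hgN j k hjk
    have hdiff : (∑ i ∈ Finset.range k, γ^i • g i) - ∑ i ∈ Finset.range j, γ^i • g i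
        = ∑ i ∈ Finset.range (k-j), γ^(j+i) • g (j+i) := by
      rw [← Finset.sum_Ico_eq_sub _ hjk, Finset.sum_Ico_eq_sum_range]
    rw [hdiff]
    have hb := nrm_sum_le S hSq (k-j) (fun i => γ^(j+i) • g (j+i))
      (fun i => Submodule.smul_mem _ _ (hg (j+i)))
    have hterm : ∀ i, Q^(i+1) * S.nrm (γ^(j+i) • g (j+i)) ≤ 2*Q*γ^j * (Q*γ)^i := by
      intro i
      rw [S.nrm_smul _ _ (hg (j+i)), abs_of_pos (pow_pos hγ0 _)]
      calc Q^(i+1) * (γ^(j+i) * S.nrm (g (j+i)))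
          ≤ Q^(i+1) * (γ^(j+i) * 2) := by
            apply mul_le_mul_of_nonneg_left
              (mul_le_mul_of_nonneg_left (hgN _) (le_of_lt (pow_pos hγ0 _)))
              (le_of_lt (pow_pos hQ0 _))
        _ = 2*Q*γ^j * (Q*γ)^i := by rw [pow_add, pow_succ, mul_pow]; ring
    calc S.nrm (∑ i ∈ Finset.range (k-j), γ^(j+i) • g (j+i))
        ≤ ∑ i ∈ Finset.range (k-j), Q^(i+1) * S.nrm (γ^(j+i) • g (j+i)) := hb
      _ ≤ ∑ i ∈ Finset.range (k-j), 2*Q*γ^j * (Q*γ)^i :=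
          Finset.sum_le_sum (fun i _ => hterm i)
      _ = 2*Q*γ^j * ∑ i ∈ Finset.range (k-j), (Q*γ)^i := by rw [Finset.mul_sum]
      _ ≤ 2*Q*γ^j * 2 :=
          mul_le_mul_of_nonneg_left (geom_bound (by positivity) hγQ _) (by positivity)
      _ = 4*Q*γ^j := by ring
  have keyA : ∀ j k, j ≤ k → S0.nrm (Pa k - Pa j) ≤ 4*Q*γ^j :=
    fun j k hjk => key S0 (le_max_left _ _) _ haC haN j k hjk
  have keyB : ∀ j k, j ≤ k → S1.nrm (Pb k - Pb j) ≤ 4*Q*γ^j :=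
    fun j k hjk => key S1 (le_max_right _ _) _ hbC hbN j k hjk
  -- Cauchy ⇒ limits
  have hcauchy : ∀ (S : QuasiNormedSpaceOn V) (P : ℕ → V), (∀ m, P m ∈ S.carrier) →
      (∀ j k, j ≤ k → S.nrm (P k - P j) ≤ 4*Q*γ^j) →
      ∀ εr : ℝ, 0 < εr → ∃ N : ℕ, ∀ m ≥ N, ∀ n ≥ N, S.nrm (P m - P n) < εr := by
    intro S P hPmem hPkey εr hεr
    have htend : Filter.Tendsto (fun N : ℕ => 4*Q*γ^N) Filter.atTop (nhds 0) := by
      have h := tendsto_pow_atTop_nhds_zero_of_lt_one (le_of_lt hγ0) hγ1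
      have h2 := h.const_mul (4*Q)
      simpa using h2
    obtain ⟨N, hN⟩ := Filter.eventually_atTop.mp (htend.eventually (gt_mem_nhds hεr))
    refine ⟨N, fun m hm n hn => ?_⟩
    rcases le_total n m with h | h
    · exact lt_of_le_of_lt (hPkey n m h) (hN n hn)
    · have heq : S.nrm (P m - P n) = S.nrm (P n - P m) := by
        rw [show P m - P n = -(P n - P m) by abel]
        exact nrm_neg_eq S (Submodule.sub_mem _ (hPmem n) (hPmem m))
      rw [heq]
      exact lt_of_le_of_lt (hPkey m n h) (hN m hm)
  obtain ⟨A, hAC, hAlim⟩ := S0.complete Pa hPaC (hcauchy S0 Pa hPaC keyA)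
  obtain ⟨B, hBC, hBlim⟩ := S1.complete Pb hPbC (hcauchy S1 Pb hPbC keyB)
  have hAq : ∀ j, S0.nrm (A - Pa j) ≤ 4*Q^2*γ^j := by
    intro j
    have h := nrm_lim_le S0 hPaC hAC hAlim (fun k hk => keyA j k hk)
    calc S0.nrm (A - Pa j) ≤ S0.qc * (4*Q*γ^j) := h
      _ ≤ Q * (4*Q*γ^j) := mul_le_mul_of_nonneg_right (le_max_left _ _) (by positivity)
      _ = 4*Q^2*γ^j := by ring
  have hBq : ∀ j, S1.nrm (B - Pb j) ≤ 4*Q^2*γ^j := by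
    intro j
    have h := nrm_lim_le S1 hPbC hBC hBlim (fun k hk => keyB j k hk)
    calc S1.nrm (B - Pb j) ≤ S1.qc * (4*Q*γ^j) := h
      _ ≤ Q * (4*Q*γ^j) := mul_le_mul_of_nonneg_right (le_max_right _ _) (by positivity)
      _ = 4*Q^2*γ^j := by ring
  have hABc : A + B ∈ csum S0 S1 := ⟨A, hAC, B, hBC, rfl⟩
  -- tail estimate
  have htailmem : ∀ j, A + B - F j ∈ csum S0 S1 := by
    intro j
    exact ⟨A - Pa j, Submodule.sub_mem _ hAC (hPaC j), B - Pb j,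
      Submodule.sub_mem _ hBC (hPbC j), by rw [hFP j]; abel⟩
  have htail : ∀ j (τ : ℝ), 0 < τ → τ ≤ t 0 →
      Kfun S0 S1 τ (A + B - F (j+1)) ≤ γ^j * (c/(4*Q^2)) := by
    intro j τ hτ0 hτt
    have hd : A + B - F (j+1) = (A - Pa (j+1)) + (B - Pb (j+1)) := by
      rw [hFP (j+1)]; abel
    have hK := Kfun_le S0 S1 (le_of_lt hτ0) (Submodule.sub_mem _ hAC (hPaC (j+1)))
      (Submodule.sub_mem _ hBC (hPbC (j+1))) hd
    have h0 := hAq (j+1)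
    have h1 := hBq (j+1)
    rw [pow_succ γ j] at h0 h1
    have hτM : τ ≤ M := le_trans hτt htM
    have hg0 : (0:ℝ) ≤ γ^j := le_of_lt (pow_pos hγ0 j)
    have hstep1 : τ * S1.nrm (B - Pb (j+1)) ≤ τ * (4*Q^2*(γ^j*γ)) :=
      mul_le_mul_of_nonneg_left h1 (le_of_lt hτ0)
    have hstep2 : τ * (4*Q^2*(γ^j*γ)) ≤ M * (4*Q^2*(γ^j*γ)) :=
      mul_le_mul_of_nonneg_right hτM (by positivity)
    have hstep3 : 4*Q^2*(γ^j*γ) + M * (4*Q^2*(γ^j*γ)) ≤ 8*Q^2*M*γ*γ^j := by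
      have hauxp : 0 ≤ (M - 1) * (4*Q^2*(γ^j*γ)) :=
        mul_nonneg (by linarith) (by positivity)
      nlinarith [hauxp]
    have hstep4 : (8*Q^2*M*γ)*γ^j ≤ (c/(4*Q^2))*γ^j :=
      mul_le_mul_of_nonneg_right hγc hg0
    calc Kfun S0 S1 τ (A + B - F (j+1))
        ≤ S0.nrm (A - Pa (j+1)) + τ * S1.nrm (B - Pb (j+1)) := hK
      _ ≤ γ^j * (c/(4*Q^2)) := by linarith
  -- main lower estimate
  have hmain : ∀ j, γ^j * (c/(2*Q)) ≤ Kfun S0 S1 (t (pick j (F j)).1) (A + B) := by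
    intro j
    set τ := t (pick j (F j)).1 with hτdef
    have hτpos : 0 < τ := ht _
    have hτ0 : (0:ℝ) ≤ τ := le_of_lt hτpos
    have hτt : τ ≤ t 0 := htmono _
    have hgj : (0:ℝ) < γ^j := pow_pos hγ0 j
    have h1 : γ^j * c < Kfun S0 S1 τ (γ^j • ((pick j (F j)).2.1 + (pick j (F j)).2.2)) := by
      rw [Kfun_smul S0 S1 hτ0 (ne_of_gt hgj) _, abs_of_pos hgj]
      exact mul_lt_mul_of_pos_left (hKgt j) hgj
    have hdec : γ^j • ((pick j (F j)).2.1 + (pick j (F j)).2.2)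
        = (A + B) + -(F j + (A + B - F (j+1))) := by
      rw [hFs j]; abel
    have hwc : F j + (A + B - F (j+1)) ∈ csum S0 S1 :=
      add_mem_csum S0 S1 (hFc j) (htailmem (j+1))
    have hnwc : -(F j + (A + B - F (j+1))) ∈ csum S0 S1 := by
      have := smul_mem_csum S0 S1 (-1) hwc
      rwa [neg_one_smul] at this
    have h2 := Kfun_add_le S0 S1 hτ0 hABc hnwc
    rw [Kfun_neg S0 S1 hτ0] at h2
    have h3 := Kfun_add_le S0 S1 hτ0 (hFc j) (htailmem (j+1))
    have h4 := hKFj j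
    have h5 := htail j τ hτpos hτt
    rw [hdec] at h1
    -- combine:  γ^j c < Q*(K(A+B) + Q*(γ^j c/(4Q²) + γ^j c/(4Q²)))
    have hKAB : 0 ≤ Kfun S0 S1 τ (A + B) := Kfun_nonneg S0 S1 hτ0 _
    have hKF : 0 ≤ Kfun S0 S1 τ (F j) := Kfun_nonneg S0 S1 hτ0 _
    have hKT : 0 ≤ Kfun S0 S1 τ (A + B - F (j+1)) := Kfun_nonneg S0 S1 hτ0 _
    have hc2 : γ^j * c ≤ Q * Kfun S0 S1 τ (A + B) + Q * Q * (γ^j * (c/(4*Q^2)) + γ^j * (c/(4*Q^2))) := by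
      nlinarith [h1, h2, h3, h4, h5, hQ0, hQ1]
    have hQsq : Q * Q * (γ^j * (c/(4*Q^2)) + γ^j * (c/(4*Q^2))) = γ^j * c / 2 := by
      field_simp; ring
    rw [hQsq] at hc2
    rw [← mul_le_mul_iff_right₀ hQ0, show Q * (γ^j * (c/(2*Q))) = γ^j * c / 2 by field_simp]
    linarith
  -- final contradiction
  obtain ⟨Cx, hCx, hCxle⟩ := hcon (A + B) hABc
  obtain ⟨j, hj⟩ := exists_nat_gt Cx
  have h1 := hmain j
  have h2 := hCxle (pick j (F j)).1
  have h3 := hεn j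
  have hgj : (0:ℝ) < γ^j := pow_pos hγ0 j
  have hchain : γ^j * (c/(2*Q)) ≤ Cx * (γ^j * (c/(2*Q*((j:ℝ)+1)))) :=
    le_trans h1 (le_trans h2 (mul_le_mul_of_nonneg_left h3 (le_of_lt hCx)))
  have e1 : γ^j * (c/(2*Q)) = (γ^j * c) / (2*Q) := by ring
  have e2 : Cx * (γ^j * (c/(2*Q*((j:ℝ)+1)))) = (Cx * (γ^j * c)) / (2*Q*((j:ℝ)+1)) := by
    ring
  rw [e1, e2, div_le_div_iff₀ (by positivity) (by positivity)] at hchain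
  -- hchain : γ^j*c * (2*Q*(j+1)) ≤ Cx*(γ^j*c) * (2*Q)
  have hjj : ((j:ℝ)+1) ≤ Cx := by
    have hX : (0:ℝ) < γ^j * c * (2*Q) := by positivity
    nlinarith [hchain, hX]
  have : (j:ℝ) < (j:ℝ) + 1 := by linarith
  linarith

end StmtAux

end Aux4


/-- For a quasi-Banach couple `(A0,A1)` the following are equivalent:
(a) `K(S(A0+A1), t, A0, A1) > c` for all `t > 0` and some constant `c > 0`;
(b) for all non-increasing null sequences `(ε_n)`, `(t_n)` of positive reals there is
`x ∈ A0+A1` with `K(x, t_n, A0, A1) ≠ O(ε_n)`. -/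
theorem stmt1 {V : Type*} [AddCommGroup V] [Module ℝ V] [TopologicalSpace V]
    [IsTopologicalAddGroup V] [ContinuousSMul ℝ V] [T2Space V]
    (S0 S1 : QuasiNormedSpaceOn V) (hcouple : IsQBCouple S0 S1) :
    (∃ c : ℝ, 0 < c ∧ ∀ t : ℝ, 0 < t → c < KSet S0 S1 t (sumSphere S0 S1)) ↔
    (∀ ε t : ℕ → ℝ,
      (∀ n, 0 < ε n) → (∀ n, ε (n+1) ≤ ε n) → Filter.Tendsto ε Filter.atTop (nhds 0) →
      (∀ n, 0 < t n) → (∀ n, t (n+1) ≤ t n) → Filter.Tendsto t Filter.atTop (nhds 0) →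
      ∃ x ∈ csum S0 S1, ¬ ∃ C : ℝ, 0 < C ∧ ∀ n : ℕ, Kfun S0 S1 (t n) x ≤ C * ε n) :=
  ⟨fun ha => StmtAux.forward S0 S1 ha, fun hb => StmtAux.backward S0 S1 hb⟩
end

section
/- Let (ε_n)_{n≥1} be a non-increasing sequence of non-negative real numbers converging to 0, and let (h(n))_{n≥1} be an increasing sequence of natural numbers satisfying n ≤ h(n) for all n. Then there exists a non-increasing sequence (ξ_n)_{n≥1} of non-negative real numbers converging to 0 such that ε_n ≤ ξ_n and ξ_n ≤ 2ξ_{h(n)} for all n. -/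
open Filter Topology

/-- Block endpoints. -/
def Nseq (h : ℕ → ℕ) : ℕ → ℕ
  | 0 => 0
  | k + 1 => h (Nseq h k) + 1

/-- Block values. -/
noncomputable def cseq (ε : ℕ → ℝ) (h : ℕ → ℕ) : ℕ → ℝ
  | 0 => ε 0
  | k + 1 => max (ε (Nseq h (k + 1))) (cseq ε h k / 2)

/-- Given a non-increasing sequence `(ε_n)` of non-negative reals
converging to `0` and an increasing sequence `(h n)` of naturals with `n ≤ h n`,
there is a non-increasing sequence `(ξ_n)` of non-negative reals converging to `0`
with `ε_n ≤ ξ_n` and `ξ_n ≤ 2 ξ_{h n}` for all `n`. -/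
theorem stmt14 (ε : ℕ → ℝ) (h : ℕ → ℕ)
    (hεnonneg : ∀ n, 0 ≤ ε n) (hεmono : ∀ n, ε (n + 1) ≤ ε n)
    (hεlim : Filter.Tendsto ε Filter.atTop (nhds 0))
    (hhmono : ∀ n, h n ≤ h (n + 1)) (hh : ∀ n, n ≤ h n) :
    ∃ ξ : ℕ → ℝ, (∀ n, 0 ≤ ξ n) ∧ (∀ n, ξ (n + 1) ≤ ξ n) ∧
      Filter.Tendsto ξ Filter.atTop (nhds 0) ∧
      (∀ n, ε n ≤ ξ n) ∧ (∀ n, ξ n ≤ 2 * ξ (h n)) := by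
  have hmon : Monotone h := monotone_nat_of_le_succ hhmono
  have hεant : Antitone ε := antitone_nat_of_succ_le hεmono
  set N : ℕ → ℕ := Nseq h with hN
  set c : ℕ → ℝ := cseq ε h with hc
  have hNsucc : ∀ k, N (k + 1) = h (N k) + 1 := fun k => rfl
  have hNsm : StrictMono N := by
    apply strictMono_nat_of_lt_succ
    intro k
    calc N k ≤ h (N k) := hh _
    _ < N (k + 1) := by rw [hNsucc]; omega
  have hNge : ∀ k, k ≤ N k := fun k => hNsm.le_apply
  have hcsucc : ∀ k, c (k + 1) = max (ε (N (k + 1))) (c k / 2) := fun k => rfl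
  have hcnonneg : ∀ k, 0 ≤ c k := by
    intro k
    cases k with
    | zero => exact hεnonneg 0
    | succ k => exact le_trans (hεnonneg _) (le_max_left _ _)
  have hεNc : ∀ k, ε (N k) ≤ c k := by
    intro k
    cases k with
    | zero => exact le_refl _
    | succ k => exact le_max_left _ _
  have hcmono : ∀ k, c (k + 1) ≤ c k := by
    intro k
    rw [hcsucc]
    refine max_le (le_trans (hεant (hNsm.monotone (Nat.le_succ k))) (hεNc k)) ?_
    linarith [hcnonneg k]
  have hcant : Antitone c := antitone_nat_of_succ_le hcmono
  have hchalf : ∀ k, c k ≤ 2 * c (k + 1) := by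
    intro k
    have := le_max_right (ε (N (k + 1))) (c k / 2)
    rw [← hcsucc] at this
    linarith
  -- additive decay bound
  have hcbound : ∀ k j, c (k + j) ≤ ε (N k) + c k / 2 ^ j := by
    intro k j
    induction j with
    | zero => simp; linarith [hεnonneg (N k)]
    | succ j ih =>
      have hnn : (0:ℝ) ≤ c k / 2 ^ (j + 1) :=
        div_nonneg (hcnonneg k) (by positivity)
      rw [show k + (j + 1) = (k + j) + 1 by ring, hcsucc]
      apply max_le
      · have h1 : ε (N (k + j + 1)) ≤ ε (N k) := hεant (hNsm.monotone (by omega))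
        linarith
      · have h2 : c (k + j) / 2 ≤ (ε (N k) + c k / 2 ^ j) / 2 := by linarith
        have heq : (ε (N k) + c k / 2 ^ j) / 2 = ε (N k) / 2 + c k / 2 ^ (j + 1) := by
          rw [pow_succ]; ring
        linarith [hεnonneg (N k)]
  have hNtend : Tendsto N atTop atTop := tendsto_atTop_mono hNge tendsto_id
  have hdiv : Tendsto (fun n : ℕ => n / 2) atTop atTop :=
    tendsto_atTop_atTop.2 fun b => ⟨2 * b, fun n hn => by omega⟩
  have hctend : Tendsto c atTop (nhds 0) := by
    apply squeeze_zero hcnonneg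
      (g := fun n => ε (N (n / 2)) + c 0 / 2 ^ (n / 2))
    · intro n
      calc c n ≤ c (n / 2 + n / 2) := hcant (by omega)
        _ ≤ ε (N (n / 2)) + c (n / 2) / 2 ^ (n / 2) := hcbound _ _
        _ ≤ ε (N (n / 2)) + c 0 / 2 ^ (n / 2) := by
            gcongr
            exact hcant (Nat.zero_le _)
    · have h1 : Tendsto (fun n : ℕ => ε (N (n / 2))) atTop (nhds 0) :=
        hεlim.comp (hNtend.comp hdiv)
      have h2 : Tendsto (fun n : ℕ => c 0 / 2 ^ (n / 2)) atTop (nhds 0) := by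
        have hp : Tendsto (fun m : ℕ => c 0 * (1 / 2 : ℝ) ^ m) atTop (nhds 0) := by
          simpa using (tendsto_pow_atTop_nhds_zero_of_lt_one
            (by norm_num : (0:ℝ) ≤ 1/2) (by norm_num : (1/2:ℝ) < 1)).const_mul (c 0)
        have := hp.comp hdiv
        simpa [div_eq_mul_inv, ← inv_pow, Function.comp_def] using this
      simpa using h1.add h2
  -- block index
  set idx : ℕ → ℕ := fun n => Nat.findGreatest (fun k => N k ≤ n) n with hidx
  have hidx1 : ∀ n, N (idx n) ≤ n := fun n =>
    Nat.findGreatest_spec (P := fun k => N k ≤ n) (m := 0) (Nat.zero_le n) (Nat.zero_le n)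
  have hidxge : ∀ k n, N k ≤ n → k ≤ idx n := fun k n hkn =>
    Nat.le_findGreatest (le_trans (hNge k) hkn) hkn
  have hidx2 : ∀ n, n < N (idx n + 1) := by
    intro n
    by_contra hcon
    push_neg at hcon
    exact Nat.findGreatest_is_greatest (P := fun k => N k ≤ n)
      (lt_add_one _) (le_trans (hNge _) hcon) hcon
  have hidxmono : Monotone idx := by
    intro a b hab
    exact hidxge _ _ (le_trans (hidx1 a) hab)
  refine ⟨fun n => c (idx n), fun n => hcnonneg _, ?_, ?_, ?_, ?_⟩
  · intro n
    exact hcant (hidxmono (Nat.le_succ n))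
  · have hidxtend : Tendsto idx atTop atTop :=
      tendsto_atTop_atTop.2 fun k => ⟨N k, fun n hn => hidxge k n hn⟩
    exact hctend.comp hidxtend
  · intro n
    exact le_trans (hεant (hidx1 n)) (hεNc _)
  · intro n
    set k := idx n with hk
    have h1 : n ≤ h (N k) := by
      have h0 := hidx2 n
      rw [hNsucc, ← hk] at h0
      omega
    have h2 : h n < N (k + 2) := by
      have : h n ≤ h (h (N k)) := hmon h1
      have h3 : N (k + 2) = h (N (k + 1)) + 1 := rfl
      have h4 : h (h (N k)) ≤ h (N (k + 1)) := hmon (by rw [hNsucc]; omega)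
      omega
    have h5 : idx (h n) ≤ k + 1 := by
      by_contra hcon
      push_neg at hcon
      have := hNsm.monotone (show k + 2 ≤ idx (h n) by omega)
      have := hidx1 (h n)
      omega
    have h6 : c (k + 1) ≤ c (idx (h n)) := hcant h5
    have := hchalf k
    linarith
end

section
/- Let X and Y be nonzero Banach spaces and let s = (s_n) be an s-numbers sequence. The following are equivalent: (a) there is a constant c>0 such that for every n ≥ 1, sup{s_n(T) : T ∈ L^A(X,Y), ‖T‖ = 1} > c; (b) for every non-increasing sequence (ε_n) of positive reals converging to 0, there exists an approximable operator T ∈ L^A(X,Y) such that (s_n(T)) is not O(ε_n), i.e., there is no constant C>0 with s_n(T) ≤ Cε_n for all n. -/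
open Filter Topology
open scoped ENNReal NNReal
open scoped Classical

noncomputable section

/-- An `s`-numbers sequence (s-numbers scale) in the sense of Pietsch: a rule
assigning to every bounded operator between Banach spaces a non-increasing sequence
of non-negative reals, starting at the operator norm, additive and multiplicative in
the index, normalized on the identities of the Euclidean spaces `ℓ²_n`, and vanishing
on operators of small rank. Here `s X Y T n` represents `s_{n+1}(T)`. -/
structure SNumberScale where
  s : ∀ (X Y : Type) [NormedAddCommGroup X] [NormedSpace ℝ X] [CompleteSpace X]
      [NormedAddCommGroup Y] [NormedSpace ℝ Y] [CompleteSpace Y],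
      (X →L[ℝ] Y) → ℕ → ℝ
  nonneg : ∀ (X Y : Type) [NormedAddCommGroup X] [NormedSpace ℝ X] [CompleteSpace X]
      [NormedAddCommGroup Y] [NormedSpace ℝ Y] [CompleteSpace Y]
      (T : X →L[ℝ] Y) (n : ℕ), 0 ≤ s X Y T n
  antitone : ∀ (X Y : Type) [NormedAddCommGroup X] [NormedSpace ℝ X] [CompleteSpace X]
      [NormedAddCommGroup Y] [NormedSpace ℝ Y] [CompleteSpace Y]
      (T : X →L[ℝ] Y) (n : ℕ), s X Y T (n + 1) ≤ s X Y T n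
  first_eq_norm : ∀ (X Y : Type) [NormedAddCommGroup X] [NormedSpace ℝ X]
      [CompleteSpace X] [NormedAddCommGroup Y] [NormedSpace ℝ Y] [CompleteSpace Y]
      (T : X →L[ℝ] Y), s X Y T 0 = ‖T‖
  add_le : ∀ (X Y : Type) [NormedAddCommGroup X] [NormedSpace ℝ X] [CompleteSpace X]
      [NormedAddCommGroup Y] [NormedSpace ℝ Y] [CompleteSpace Y]
      (S T : X →L[ℝ] Y) (n m : ℕ),
      s X Y (S + T) (n + m) ≤ s X Y S n + s X Y T m
  comp_le : ∀ (X Y Z : Type) [NormedAddCommGroup X] [NormedSpace ℝ X] [CompleteSpace X]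
      [NormedAddCommGroup Y] [NormedSpace ℝ Y] [CompleteSpace Y]
      [NormedAddCommGroup Z] [NormedSpace ℝ Z] [CompleteSpace Z]
      (S : X →L[ℝ] Y) (T : Y →L[ℝ] Z) (n m : ℕ),
      s X Z (T.comp S) (n + m) ≤ s Y Z T n * s X Y S m
  id_euclidean : ∀ n : ℕ,
      s (EuclideanSpace ℝ (Fin (n + 1))) (EuclideanSpace ℝ (Fin (n + 1)))
        (ContinuousLinearMap.id ℝ (EuclideanSpace ℝ (Fin (n + 1)))) n = 1
  rank_small : ∀ (X Y : Type) [NormedAddCommGroup X] [NormedSpace ℝ X] [CompleteSpace X]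
      [NormedAddCommGroup Y] [NormedSpace ℝ Y] [CompleteSpace Y]
      (T : X →L[ℝ] Y) (n : ℕ),
      Module.rank ℝ (LinearMap.range (T : X →ₗ[ℝ] Y)) < ((n : Cardinal) + 1) → s X Y T n = 0

variable {X Y : Type*} [NormedAddCommGroup X] [NormedSpace ℝ X]
  [NormedAddCommGroup Y] [NormedSpace ℝ Y]

/-- An approximable operator: a member of the operator-norm closure of the
finite-rank operators. -/
def IsApproximable (T : X →L[ℝ] Y) : Prop :=
  T ∈ closure {R : X →L[ℝ] Y | FiniteDimensional ℝ (LinearMap.range (R : X →ₗ[ℝ] Y))}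

/-- `X` admits, for each `n`, a `C`-complemented subspace `C`-isomorphic to `ℓ²_n`. -/
def UnifComplEuclidean (C : ℝ) (X : Type*) [NormedAddCommGroup X] [NormedSpace ℝ X] :
    Prop :=
  ∀ n : ℕ, ∃ P : X →L[ℝ] X, P.comp P = P ∧ ‖P‖ ≤ C ∧
    ∃ u : ↥(LinearMap.range (P : X →ₗ[ℝ] X)) ≃L[ℝ] EuclideanSpace ℝ (Fin (n + 1)),
      ‖(u : ↥(LinearMap.range (P : X →ₗ[ℝ] X)) →L[ℝ] EuclideanSpace ℝ (Fin (n + 1)))‖ ≤ C ∧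
      ‖(u.symm : EuclideanSpace ℝ (Fin (n + 1)) →L[ℝ] ↥(LinearMap.range (P : X →ₗ[ℝ] X)))‖ ≤ C

/-- Membership in `L^{(s)}_{p,q}(X,Y)` for an s-numbers scale `σ`. -/
def memLs (σ : SNumberScale) (p : ℝ) (q : ℝ≥0∞)
    (X Y : Type) [NormedAddCommGroup X] [NormedSpace ℝ X] [CompleteSpace X]
    [NormedAddCommGroup Y] [NormedSpace ℝ Y] [CompleteSpace Y]
    (T : X →L[ℝ] Y) : Prop :=
  if q = ⊤ then ∃ M : ℝ, ∀ n : ℕ, ((n : ℝ) + 1) ^ (1/p) * σ.s X Y T n ≤ M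
  else Summable (fun n : ℕ =>
    (((n : ℝ) + 1) ^ (1/p - 1/q.toReal) * σ.s X Y T n) ^ q.toReal)

end


noncomputable section Helpers

variable {X Y : Type} [NormedAddCommGroup X] [NormedSpace ℝ X] [CompleteSpace X]
  [NormedAddCommGroup Y] [NormedSpace ℝ Y] [CompleteSpace Y]

lemma clm_norm_smul (a : ℝ) (T : X →L[ℝ] Y) : ‖a • T‖ = ‖a‖ * ‖T‖ :=
  norm_smul a T

-- smul upper bound
lemma s_smul_le (σ : SNumberScale) (a : ℝ) (T : X →L[ℝ] Y) (n : ℕ) :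
    σ.s X Y (a • T) n ≤ |a| * σ.s X Y T n := by
  have h := σ.comp_le X Y Y T (a • ContinuousLinearMap.id ℝ Y) 0 n
  have he : (a • ContinuousLinearMap.id ℝ Y).comp T = a • T := by
    ext x; simp
  rw [he, zero_add, σ.first_eq_norm] at h
  refine h.trans ?_
  gcongr
  · exact σ.nonneg _ _ _ _
  · refine ContinuousLinearMap.opNorm_le_bound _ (abs_nonneg a) fun x => ?_
    simp [norm_smul, Real.norm_eq_abs]

lemma s_smul_ge (σ : SNumberScale) {a : ℝ} (ha : 0 < a) (T : X →L[ℝ] Y) (n : ℕ) :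
    a * σ.s X Y T n ≤ σ.s X Y (a • T) n := by
  have h := s_smul_le σ a⁻¹ (a • T) n
  rw [inv_smul_smul₀ ha.ne' T, abs_of_pos (inv_pos.2 ha)] at h
  have h2 := mul_le_mul_of_nonneg_left h ha.le
  rwa [← mul_assoc, mul_inv_cancel₀ ha.ne', one_mul] at h2

-- perturbation
lemma s_perturb (σ : SNumberScale) (S T : X →L[ℝ] Y) (n : ℕ) :
    σ.s X Y T n ≤ σ.s X Y S n + ‖T - S‖ := by
  have h := σ.add_le X Y S (T - S) n 0
  rw [σ.first_eq_norm] at h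
  simpa using h

-- antitone over ≤
lemma s_anti (σ : SNumberScale) (T : X →L[ℝ] Y) : Antitone (σ.s X Y T) :=
  antitone_nat_of_succ_le (σ.antitone X Y T)

lemma range_add_le (f g : X →L[ℝ] Y) :
    LinearMap.range ((f + g : X →L[ℝ] Y) : X →ₗ[ℝ] Y) ≤ LinearMap.range ((f : X →L[ℝ] Y) : X →ₗ[ℝ] Y) ⊔ LinearMap.range ((g : X →L[ℝ] Y) : X →ₗ[ℝ] Y) := by
  rintro _ ⟨x, rfl⟩
  exact Submodule.add_mem_sup (LinearMap.mem_range_self _ x) (LinearMap.mem_range_self _ x)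

lemma range_smul_le (a : ℝ) (f : X →L[ℝ] Y) :
    LinearMap.range ((a • f : X →L[ℝ] Y) : X →ₗ[ℝ] Y) ≤ LinearMap.range ((f : X →L[ℝ] Y) : X →ₗ[ℝ] Y) := by
  rintro _ ⟨x, rfl⟩
  have : ((a • f : X →L[ℝ] Y) : X →ₗ[ℝ] Y) x = a • f x := rfl
  rw [this]
  exact Submodule.smul_mem _ _ (LinearMap.mem_range_self _ x)

lemma rank_sum_le (F : ℕ → X →L[ℝ] Y) (a : ℕ → ℝ) (j : ℕ) :
    Module.rank ℝ (LinearMap.range (((∑ i ∈ Finset.range j, a i • F i) : X →L[ℝ] Y) : X →ₗ[ℝ] Y)) ≤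
      ∑ i ∈ Finset.range j, Module.rank ℝ (LinearMap.range ((F i : X →L[ℝ] Y) : X →ₗ[ℝ] Y)) := by
  induction j with
  | zero =>
      simp only [Finset.range_zero, Finset.sum_empty, Finset.sum_empty]
      have : LinearMap.range (((0 : X →L[ℝ] Y) : X →L[ℝ] Y) : X →ₗ[ℝ] Y) = ⊥ := by
        ext y; simp [eq_comm]
      exact (Submodule.rank_mono this.le).trans_eq (rank_bot ℝ Y)
  | succ j ih =>
    rw [Finset.sum_range_succ, Finset.sum_range_succ]
    calc Module.rank ℝ (LinearMap.range (((∑ i ∈ Finset.range j, a i • F i) + a j • F j : X →L[ℝ] Y) : X →ₗ[ℝ] Y)) ≤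
        Module.rank ℝ ((LinearMap.range (((∑ i ∈ Finset.range j, a i • F i) : X →L[ℝ] Y) : X →ₗ[ℝ] Y)) ⊔
          LinearMap.range ((a j • F j : X →L[ℝ] Y) : X →ₗ[ℝ] Y) : Submodule ℝ Y) := Submodule.rank_mono (range_add_le _ _)
      _ ≤ Module.rank ℝ (LinearMap.range (((∑ i ∈ Finset.range j, a i • F i) : X →L[ℝ] Y) : X →ₗ[ℝ] Y)) +
          Module.rank ℝ (LinearMap.range ((a j • F j : X →L[ℝ] Y) : X →ₗ[ℝ] Y)) := Submodule.rank_add_le_rank_add_rank _ _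
      _ ≤ _ := by
          gcongr
          exact Submodule.rank_mono (range_smul_le _ _)

lemma findim_sum (F : ℕ → X →L[ℝ] Y) (a : ℕ → ℝ)
    (hF : ∀ i, FiniteDimensional ℝ (LinearMap.range ((F i : X →L[ℝ] Y) : X →ₗ[ℝ] Y))) (j : ℕ) :
    FiniteDimensional ℝ
      (LinearMap.range (((∑ i ∈ Finset.range j, a i • F i) : X →L[ℝ] Y) : X →ₗ[ℝ] Y)) := by
  refine IsNoetherian.iff_fg.1 <| IsNoetherian.iff_rank_lt_aleph0.2 <|
    lt_of_le_of_lt (rank_sum_le F a j) ?_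
  have : ∀ i ∈ Finset.range j, Module.rank ℝ (LinearMap.range ((F i : X →L[ℝ] Y) : X →ₗ[ℝ] Y)) =
      ((Module.finrank ℝ (LinearMap.range ((F i : X →L[ℝ] Y) : X →ₗ[ℝ] Y)) : ℕ) : Cardinal) := by
    intro i _
    exact (Module.finrank_eq_rank ℝ _).symm
  rw [Finset.sum_congr rfl this, ← Nat.cast_sum]
  exact Cardinal.nat_lt_aleph0 _

lemma s_rank_zero (σ : SNumberScale) (H : X →L[ℝ] Y) (r : ℕ)
    (h : Module.rank ℝ (LinearMap.range ((H : X →L[ℝ] Y) : X →ₗ[ℝ] Y)) ≤ (r : Cardinal)) : σ.s X Y H r = 0 := by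
  refine σ.rank_small X Y H r (h.trans_lt ?_)
  have : ((r : Cardinal) + 1) = (((r + 1 : ℕ)) : Cardinal) := by push_cast; ring
  rw [this]
  exact_mod_cast Nat.lt_succ_self r

lemma exists_norm_one_finrank [Nontrivial X] [Nontrivial Y] :
    ∃ T : X →L[ℝ] Y, FiniteDimensional ℝ (LinearMap.range ((T : X →L[ℝ] Y) : X →ₗ[ℝ] Y)) ∧ ‖T‖ = 1 := by
  obtain ⟨x, hx⟩ := exists_ne (0 : X)
  obtain ⟨y, hy⟩ := exists_ne (0 : Y)
  obtain ⟨g, hg1, hgx⟩ := exists_dual_vector ℝ x (norm_ne_zero_iff.mpr hx)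
  set y0 : Y := ‖y‖⁻¹ • y with hy0def
  have hy0 : ‖y0‖ = 1 := by
    rw [hy0def, norm_smul, norm_inv, norm_norm]
    exact inv_mul_cancel₀ (norm_ne_zero_iff.mpr hy)
  refine ⟨g.smulRight y0, ?_, ?_⟩
  · have hle : LinearMap.range ((g.smulRight y0 : X →L[ℝ] Y) : X →ₗ[ℝ] Y) ≤ Submodule.span ℝ {y0} := by
      rintro _ ⟨z, rfl⟩
      have : ((g.smulRight y0 : X →L[ℝ] Y) : X →ₗ[ℝ] Y) z = (g z) • y0 := rfl
      rw [this]
      exact Submodule.smul_mem _ _ (Submodule.mem_span_singleton_self _)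
    exact Submodule.finiteDimensional_of_le hle
  · rw [ContinuousLinearMap.norm_smulRight_apply, hg1, hy0, mul_one]

set_option maxHeartbeats 1000000 in
lemma dir_ab (σ : SNumberScale) {c : ℝ} (hc : 0 < c)
    (ha : ∀ n : ℕ, ∃ T : X →L[ℝ] Y, IsApproximable T ∧ ‖T‖ = 1 ∧ c < σ.s X Y T n)
    (ε : ℕ → ℝ) (hε0 : ∀ n, 0 < ε n) (hεlim : Tendsto ε atTop (nhds 0)) :
    ∃ T : X →L[ℝ] Y, IsApproximable T ∧
      ¬ ∃ C : ℝ, 0 < C ∧ ∀ n : ℕ, σ.s X Y T n ≤ C * ε n := by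
  classical
  have hc1 : c < 1 := by
    obtain ⟨T, _, hT1, hTn⟩ := ha 0
    rwa [σ.first_eq_norm, hT1] at hTn
  have hF : ∀ n : ℕ, ∃ F : X →L[ℝ] Y, FiniteDimensional ℝ (LinearMap.range ((F : X →L[ℝ] Y) : X →ₗ[ℝ] Y)) ∧
      ‖F‖ ≤ 2 ∧ c / 2 < σ.s X Y F n := by
    intro n
    obtain ⟨T, hTa, hT1, hTn⟩ := ha n
    obtain ⟨F, hFmem, hFd⟩ := Metric.mem_closure_iff.mp hTa (c / 2) (by linarith)
    rw [dist_eq_norm] at hFd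
    refine ⟨F, hFmem, ?_, ?_⟩
    · have h1 : ‖F‖ - ‖T‖ ≤ ‖F - T‖ := norm_sub_norm_le F T
      rw [norm_sub_rev] at h1
      rw [hT1] at h1
      linarith
    · have h2 := s_perturb σ F T n
      linarith
  choose Fch hFch1 hFch2 hFch3 using hF
  set t : ℝ := c / 16 with htdef
  have ht : 0 < t := by positivity
  have ht2 : t ≤ 1 / 2 := by rw [htdef]; linarith
  have ht1 : t < 1 := by linarith
  have hm : ∀ j : ℕ, ∃ m : ℕ, ε m ≤ t ^ j * c / (4 * (j + 1)) := by
    intro j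
    have hpos : (0:ℝ) < t ^ j * c / (4 * (j + 1)) := by positivity
    exact (hεlim.eventually_lt_const hpos).exists.imp fun m hm => hm.le
  choose mch hmch1 using hm
  obtain ⟨ρ, hρ0, hρs⟩ : ∃ ρ : ℕ → ℕ, ρ 0 = 0 ∧ ∀ j, ρ (j + 1) =
      ρ j + Module.finrank ℝ (LinearMap.range ((Fch (mch j + ρ j) : X →L[ℝ] Y) : X →ₗ[ℝ] Y)) :=
    ⟨fun j => Nat.rec 0
      (fun i r => r + Module.finrank ℝ (LinearMap.range ((Fch (mch i + r) : X →L[ℝ] Y) : X →ₗ[ℝ] Y))) j,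
      rfl, fun j => rfl⟩
  obtain ⟨Fs, hFsdef⟩ : ∃ Fs : ℕ → X →L[ℝ] Y, ∀ j, Fs j = Fch (mch j + ρ j) :=
    ⟨fun j => Fch (mch j + ρ j), fun j => rfl⟩
  have hFs1 : ∀ j, FiniteDimensional ℝ (LinearMap.range ((Fs j : X →L[ℝ] Y) : X →ₗ[ℝ] Y)) := by
    intro j; rw [hFsdef]; exact hFch1 _
  have hFs2 : ∀ j, ‖Fs j‖ ≤ 2 := by intro j; rw [hFsdef]; exact hFch2 _
  have hFs3 : ∀ j, c / 2 < σ.s X Y (Fs j) (mch j + ρ j) := by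
    intro j; rw [hFsdef]; exact hFch3 _
  have hρj : ∀ j, ρ j = ∑ i ∈ Finset.range j, Module.finrank ℝ (LinearMap.range ((Fs i : X →L[ℝ] Y) : X →ₗ[ℝ] Y)) := by
    intro j
    induction j with
    | zero => rw [hρ0, Finset.range_zero, Finset.sum_empty]
    | succ i ih => rw [hρs, Finset.sum_range_succ, ← ih, hFsdef]
  obtain ⟨G, hGdef⟩ : ∃ G : ℕ → X →L[ℝ] Y, ∀ j, G j = t ^ j • Fs j :=
    ⟨fun j => t ^ j • Fs j, fun j => rfl⟩
  have hGnorm : ∀ j, ‖G j‖ ≤ 2 * t ^ j := by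
    intro j
    rw [hGdef]
    refine ContinuousLinearMap.opNorm_le_bound _ (by positivity) fun x => ?_
    have hx : ‖(t ^ j • Fs j) x‖ = t ^ j * ‖(Fs j) x‖ := by
      have : (t ^ j • Fs j) x = t ^ j • (Fs j x) := rfl
      rw [this, norm_smul, Real.norm_eq_abs, abs_of_pos (pow_pos ht j)]
    rw [hx]
    have hb : ‖(Fs j) x‖ ≤ 2 * ‖x‖ :=
      le_trans ((Fs j).le_opNorm x) (by
        have := hFs2 j
        nlinarith [norm_nonneg x])
    nlinarith [pow_pos ht j, norm_nonneg x, norm_nonneg ((Fs j) x)]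
  have hsumnorm : Summable (fun j => ‖G j‖) := by
    refine Summable.of_nonneg_of_le (fun j => norm_nonneg _) hGnorm ?_
    exact (summable_geometric_of_lt_one ht.le ht1).mul_left 2
  have hsum : Summable G := hsumnorm.of_norm
  obtain ⟨T, hTdef⟩ : ∃ T : X →L[ℝ] Y, T = ∑' j, G j := ⟨∑' j, G j, rfl⟩
  have happrox : IsApproximable T := by
    rw [hTdef]
    refine mem_closure_of_tendsto hsum.hasSum.tendsto_sum_nat ?_
    filter_upwards with N
    have : (∑ i ∈ Finset.range N, G i) = ∑ i ∈ Finset.range N, t ^ i • Fs i :=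
      Finset.sum_congr rfl fun i _ => hGdef i
    rw [this]
    exact findim_sum Fs (fun i => t ^ i) hFs1 N
  refine ⟨T, happrox, ?_⟩
  have hkey : ∀ j : ℕ, t ^ j * (c / 4) ≤ σ.s X Y T (mch j) := by
    intro j
    set m := mch j with hm'
    obtain ⟨R, hRdef⟩ : ∃ R : X →L[ℝ] Y, R = ∑' k, G (k + (j + 1)) :=
      ⟨∑' k, G (k + (j + 1)), rfl⟩
    obtain ⟨H, hHdef⟩ : ∃ H : X →L[ℝ] Y, H = ∑ i ∈ Finset.range j, G i :=
      ⟨∑ i ∈ Finset.range j, G i, rfl⟩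
    have hsplit : (∑ i ∈ Finset.range (j + 1), G i) + R = T := by
      rw [hRdef, hTdef]
      exact Summable.sum_add_tsum_nat_add (j + 1) hsum
    have heq : G j = (T - R) + -H := by
      rw [Finset.sum_range_succ, hHdef.symm] at hsplit
      rw [← hsplit]
      abel
    have hRnorm : ‖R‖ ≤ c / 4 * t ^ j := by
      have hsub : Summable fun k => ‖G (k + (j + 1))‖ :=
        hsumnorm.comp_injective (add_left_injective (j + 1))
      have h1 : ‖R‖ ≤ ∑' k, ‖G (k + (j + 1))‖ := by
        rw [hRdef]; exact norm_tsum_le_tsum_norm hsub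
      have h2 : ∑' k : ℕ, ‖G (k + (j + 1))‖ ≤ ∑' k : ℕ, 2 * t ^ (j + 1) * t ^ k := by
        refine Summable.tsum_le_tsum (fun k => ?_) hsub
          ((summable_geometric_of_lt_one ht.le ht1).mul_left _)
        calc ‖G (k + (j + 1))‖ ≤ 2 * t ^ (k + (j + 1)) := hGnorm _
          _ = 2 * t ^ (j + 1) * t ^ k := by rw [pow_add]; ring
      have h3 : ∑' k : ℕ, 2 * t ^ (j + 1) * t ^ k = 2 * t ^ (j + 1) * (1 - t)⁻¹ := by
        rw [tsum_mul_left, tsum_geometric_of_lt_one ht.le ht1]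
      have h4 : (1 - t)⁻¹ ≤ 2 := by
        rw [inv_le_comm₀ (by linarith) (by norm_num)]
        linarith
      have h5 : 2 * t ^ (j + 1) * (1 - t)⁻¹ ≤ 4 * t ^ (j + 1) := by
        nlinarith [pow_pos ht (j + 1)]
      have h6 : (4 : ℝ) * t ^ (j + 1) = c / 4 * t ^ j := by
        rw [pow_succ, htdef]; ring
      linarith
    have hHzero : σ.s X Y (-H) (ρ j) = 0 := by
      refine s_rank_zero σ (-H) (ρ j) ?_
      have hneg : LinearMap.range ((-H : X →L[ℝ] Y) : X →ₗ[ℝ] Y) ≤ LinearMap.range ((H : X →L[ℝ] Y) : X →ₗ[ℝ] Y) := by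
        have h7 : -H = (-1 : ℝ) • H := by rw [neg_one_smul]
        rw [h7]
        exact range_smul_le _ _
      have hHsum : H = ∑ i ∈ Finset.range j, t ^ i • Fs i := by
        rw [hHdef]
        exact Finset.sum_congr rfl fun i _ => hGdef i
      calc Module.rank ℝ (LinearMap.range ((-H : X →L[ℝ] Y) : X →ₗ[ℝ] Y)) ≤ Module.rank ℝ (LinearMap.range ((H : X →L[ℝ] Y) : X →ₗ[ℝ] Y)) :=
            Submodule.rank_mono hneg
        _ ≤ ∑ i ∈ Finset.range j, Module.rank ℝ (LinearMap.range ((Fs i : X →L[ℝ] Y) : X →ₗ[ℝ] Y)) := by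
            rw [hHsum]; exact rank_sum_le Fs _ j
        _ = ((∑ i ∈ Finset.range j, Module.finrank ℝ (LinearMap.range ((Fs i : X →L[ℝ] Y) : X →ₗ[ℝ] Y)) : ℕ) : Cardinal) := by
            rw [Nat.cast_sum]
            exact Finset.sum_congr rfl fun i _ => (Module.finrank_eq_rank ℝ _).symm
        _ = ((ρ j : ℕ) : Cardinal) := by rw [hρj j]
    have step1 : t ^ j * σ.s X Y (Fs j) (m + ρ j) ≤ σ.s X Y (G j) (m + ρ j) := by
      rw [hGdef]
      exact s_smul_ge σ (pow_pos ht j) _ _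
    have step2 : σ.s X Y (G j) (m + ρ j) ≤ σ.s X Y (T - R) m + σ.s X Y (-H) (ρ j) := by
      rw [heq]
      exact σ.add_le X Y (T - R) (-H) m (ρ j)
    have step3 : σ.s X Y (T - R) m ≤ σ.s X Y T m + ‖R‖ := by
      have h8 := s_perturb σ T (T - R) m
      simpa using h8
    have step4 : c / 2 < σ.s X Y (Fs j) (m + ρ j) := hFs3 _
    nlinarith [pow_pos ht j]
  rintro ⟨C, hC, hCb⟩
  set j : ℕ := ⌈C⌉₊ with hj
  have hCj : C < (j : ℝ) + 1 := (Nat.le_ceil C).trans_lt (lt_add_one _)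
  have h1 := hkey j
  have h2 := hCb (mch j)
  have h3 := hmch1 j
  have h4 := hε0 (mch j)
  have h5 : C * ε (mch j) < ((j : ℝ) + 1) * ε (mch j) :=
    mul_lt_mul_of_pos_right hCj h4
  have h6 : ((j : ℝ) + 1) * ε (mch j) ≤ ((j : ℝ) + 1) * (t ^ j * c / (4 * (j + 1))) :=
    mul_le_mul_of_nonneg_left h3 (by positivity)
  have h7 : ((j : ℝ) + 1) * (t ^ j * c / (4 * (j + 1))) = t ^ j * (c / 4) := by
    have : ((j : ℝ) + 1) ≠ 0 := by positivity
    field_simp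
  linarith

lemma dir_ba (σ : SNumberScale) [Nontrivial X] [Nontrivial Y]
    (hb : ∀ ε : ℕ → ℝ, (∀ n, 0 < ε n) → (∀ n, ε (n + 1) ≤ ε n) →
      Tendsto ε atTop (nhds 0) →
      ∃ T : X →L[ℝ] Y, IsApproximable T ∧
        ¬ ∃ C : ℝ, 0 < C ∧ ∀ n : ℕ, σ.s X Y T n ≤ C * ε n) :
    ∃ c : ℝ, 0 < c ∧ ∀ n : ℕ, ∃ T : X →L[ℝ] Y,
      IsApproximable T ∧ ‖T‖ = 1 ∧ c < σ.s X Y T n := by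
  classical
  by_contra hA
  push_neg at hA
  obtain ⟨T0, hT0fd, hT0n⟩ := exists_norm_one_finrank (X := X) (Y := Y)
  have hT0a : IsApproximable T0 := subset_closure hT0fd
  set Sset : ℕ → Set ℝ := fun n =>
    {r | ∃ T : X →L[ℝ] Y, IsApproximable T ∧ ‖T‖ = 1 ∧ r = σ.s X Y T n} with hSset
  have hne : ∀ n, (Sset n).Nonempty := fun n => ⟨_, T0, hT0a, hT0n, rfl⟩
  have hbdd : ∀ n, BddAbove (Sset n) := by
    intro n
    refine ⟨1, ?_⟩
    rintro r ⟨T, hTa, hT1, rfl⟩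
    calc σ.s X Y T n ≤ σ.s X Y T 0 := s_anti σ T (Nat.zero_le n)
      _ = 1 := by rw [σ.first_eq_norm, hT1]
  set φ : ℕ → ℝ := fun n => sSup (Sset n) with hφ
  have hφnn : ∀ n, 0 ≤ φ n := fun n =>
    le_trans (σ.nonneg X Y T0 n) (le_csSup (hbdd n) ⟨T0, hT0a, hT0n, rfl⟩)
  have hφub : ∀ n (T : X →L[ℝ] Y), IsApproximable T → ‖T‖ = 1 → σ.s X Y T n ≤ φ n :=
    fun n T hTa hT1 => le_csSup (hbdd n) ⟨T, hTa, hT1, rfl⟩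
  have hφanti : Antitone φ := by
    intro n m hnm
    refine csSup_le (hne m) ?_
    rintro r ⟨T, hTa, hT1, rfl⟩
    exact (s_anti σ T hnm).trans (hφub n T hTa hT1)
  have hφlim : Tendsto φ atTop (nhds 0) := by
    have hbb : BddBelow (Set.range φ) := ⟨0, by rintro _ ⟨n, rfl⟩; exact hφnn n⟩
    have h := tendsto_atTop_ciInf hφanti hbb
    have hinf : ⨅ n, φ n = 0 := by
      refine le_antisymm ?_ (le_ciInf hφnn)
      refine le_of_forall_pos_le_add fun d hd => ?_
      obtain ⟨n, hn⟩ := hA d hd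
      have hpn : φ n ≤ d := csSup_le (hne n) (by rintro r ⟨T, hTa, hT1, rfl⟩; exact hn T hTa hT1)
      have := ciInf_le hbb n
      linarith
    rwa [hinf] at h
  set ε : ℕ → ℝ := fun n => φ n + (1 / 2 : ℝ) ^ n with hε
  have hε0 : ∀ n, 0 < ε n := fun n => by
    have := hφnn n
    have : (0:ℝ) < (1/2:ℝ) ^ n := by positivity
    simp only [hε]
    have := hφnn n
    linarith
  have hεstep : ∀ n, ε (n + 1) ≤ ε n := by
    intro n
    simp only [hε]
    have h1 : φ (n + 1) ≤ φ n := hφanti (Nat.le_succ n)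
    have h2 : (1/2:ℝ) ^ (n+1) ≤ (1/2:ℝ) ^ n :=
      pow_le_pow_of_le_one (by norm_num) (by norm_num) (Nat.le_succ n)
    linarith
  have hεlim : Tendsto ε atTop (nhds 0) := by
    have h2 : Tendsto (fun n : ℕ => (1/2:ℝ) ^ n) atTop (nhds 0) :=
      tendsto_pow_atTop_nhds_zero_of_lt_one (by norm_num) (by norm_num)
    have h3 := hφlim.add h2
    rw [hε]
    simpa [one_div, inv_pow] using h3
  obtain ⟨T, hTa, hTn⟩ := hb ε hε0 hεstep hεlim
  apply hTn
  refine ⟨‖T‖ + 1, by have := norm_nonneg T; linarith, fun n => ?_⟩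
  rcases eq_or_ne T 0 with rfl | hT0'
  · have hz : σ.s X Y (0 : X →L[ℝ] Y) n ≤ 0 := by
      have h := s_smul_le σ 0 (0 : X →L[ℝ] Y) n
      rw [zero_smul] at h
      simpa using h
    have hp : 0 ≤ (‖(0 : X →L[ℝ] Y)‖ + 1) * ε n :=
      mul_nonneg (by have := norm_nonneg (0 : X →L[ℝ] Y); linarith) (hε0 n).le
    linarith
  · have hTnorm : ‖T‖ ≠ 0 := norm_ne_zero_iff.2 hT0'
    set T' : X →L[ℝ] Y := ‖T‖⁻¹ • T with hT'
    have hT'n : ‖T'‖ = 1 := by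
      have hns : ‖T'‖ = ‖(‖T‖⁻¹ : ℝ)‖ * ‖T‖ := by rw [hT']; exact clm_norm_smul _ _
      rw [hns, norm_inv, norm_norm]
      exact inv_mul_cancel₀ hTnorm
    have hT'a : IsApproximable T' := by
      have hmap : Set.MapsTo (fun R : X →L[ℝ] Y => ‖T‖⁻¹ • R)
          {R : X →L[ℝ] Y | FiniteDimensional ℝ (LinearMap.range ((R : X →L[ℝ] Y) : X →ₗ[ℝ] Y))}
          {R : X →L[ℝ] Y | FiniteDimensional ℝ (LinearMap.range ((R : X →L[ℝ] Y) : X →ₗ[ℝ] Y))} := by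
        intro R hR
        have : FiniteDimensional ℝ (LinearMap.range ((R : X →L[ℝ] Y) : X →ₗ[ℝ] Y)) := hR
        exact Submodule.finiteDimensional_of_le (range_smul_le _ _)
      exact hmap.closure (continuous_const_smul _) hTa
    have heqT : ‖T‖ • T' = T := by
      rw [hT', smul_inv_smul₀ hTnorm]
    have h1 : σ.s X Y T n ≤ ‖T‖ * σ.s X Y T' n := by
      have h := s_smul_le σ ‖T‖ T' n
      rw [heqT, abs_of_nonneg (norm_nonneg T)] at h
      exact h
    have h2 : σ.s X Y T' n ≤ φ n := hφub n T' hT'a hT'n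
    have h3 : φ n ≤ ε n := by
      simp only [hε]
      have : (0:ℝ) < (1/2:ℝ) ^ n := by positivity
      linarith
    have h4 : 0 ≤ ε n := (hε0 n).le
    nlinarith [norm_nonneg T, σ.nonneg X Y T' n]

end Helpers

/-- Let `X, Y` be nonzero Banach spaces and `s` an s-numbers
sequence. The following are equivalent: (a) for some `c > 0` and every `n`,
`sup{s_n(T) : T ∈ L^A(X,Y), ‖T‖=1} > c`; (b) for every non-increasing positive null
sequence `(ε_n)` there is an approximable `T` with `s_n(T) ≠ O(ε_n)`. -/
theorem stmt15 (X Y : Type) [NormedAddCommGroup X] [NormedSpace ℝ X] [CompleteSpace X]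
    [NormedAddCommGroup Y] [NormedSpace ℝ Y] [CompleteSpace Y]
    [Nontrivial X] [Nontrivial Y] (σ : SNumberScale) :
    (∃ c : ℝ, 0 < c ∧ ∀ n : ℕ, ∃ T : X →L[ℝ] Y,
      IsApproximable T ∧ ‖T‖ = 1 ∧ c < σ.s X Y T n) ↔
    (∀ ε : ℕ → ℝ, (∀ n, 0 < ε n) → (∀ n, ε (n + 1) ≤ ε n) →
      Filter.Tendsto ε Filter.atTop (nhds 0) →
      ∃ T : X →L[ℝ] Y, IsApproximable T ∧
        ¬ ∃ C : ℝ, 0 < C ∧ ∀ n : ℕ, σ.s X Y T n ≤ C * ε n) := by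
  constructor
  · rintro ⟨c, hc, ha⟩ ε hε0 _ hεlim
    exact dir_ab σ hc ha ε hε0 hεlim
  · intro hb
    exact dir_ba σ hb
end

section
/- Let X and Y be Banach spaces that admit uniformly complemented copies of ℓ²_n for each n: there is a constant C ≥ 1 such that for every n there exist a bounded projection P_n on X with ‖P_n‖ ≤ C whose range E_n admits a linear isomorphism u_n : E_n → ℓ²_n with ‖u_n‖, ‖u_n^{-1}‖ ≤ C, and similarly a projection Q_n on Y with range F_n that is C-isomorphic to ℓ²_n. Then for every s-numbers sequence s and every non-increasing sequence (ε_n) of positive reals converging to 0, there exists an approximable operator T ∈ L^A(X,Y) such that (s_n(T)) is not O(ε_n), i.e., there is no constant K>0 with s_n(T) ≤ Kε_n for all n. -/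
set_option maxHeartbeats 2000000
set_option synthInstance.maxHeartbeats 400000


open Filter Topology
open scoped ENNReal NNReal
open scoped Classical

noncomputable section
set_option maxHeartbeats 1000000

variable {X Y : Type} [NormedAddCommGroup X] [NormedSpace ℝ X]
  [NormedAddCommGroup Y] [NormedSpace ℝ Y]

lemma exists_blocks (C : ℝ) (hC : 1 ≤ C) (n : ℕ)
    (hXn : ∃ P : X →L[ℝ] X, P.comp P = P ∧ ‖P‖ ≤ C ∧
      ∃ u : ↥(LinearMap.range (P : X →ₗ[ℝ] X)) ≃L[ℝ] EuclideanSpace ℝ (Fin (n + 1)),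
        ‖(u : ↥(LinearMap.range (P : X →ₗ[ℝ] X)) →L[ℝ] EuclideanSpace ℝ (Fin (n + 1)))‖ ≤ C ∧
        ‖(u.symm : EuclideanSpace ℝ (Fin (n + 1)) →L[ℝ] ↥(LinearMap.range (P : X →ₗ[ℝ] X)))‖ ≤ C)
    (hYn : ∃ Q : Y →L[ℝ] Y, Q.comp Q = Q ∧ ‖Q‖ ≤ C ∧
      ∃ v : ↥(LinearMap.range (Q : Y →ₗ[ℝ] Y)) ≃L[ℝ] EuclideanSpace ℝ (Fin (n + 1)),
        ‖(v : ↥(LinearMap.range (Q : Y →ₗ[ℝ] Y)) →L[ℝ] EuclideanSpace ℝ (Fin (n + 1)))‖ ≤ C ∧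
        ‖(v.symm : EuclideanSpace ℝ (Fin (n + 1)) →L[ℝ] ↥(LinearMap.range (Q : Y →ₗ[ℝ] Y)))‖ ≤ C) :
    ∃ (R : X →L[ℝ] Y) (A : EuclideanSpace ℝ (Fin (n + 1)) →L[ℝ] X)
      (B : Y →L[ℝ] EuclideanSpace ℝ (Fin (n + 1))),
      ‖R‖ ≤ C ^ 3 ∧ ‖A‖ ≤ C ∧ ‖B‖ ≤ C ^ 2 ∧
      B.comp (R.comp A) = ContinuousLinearMap.id ℝ (EuclideanSpace ℝ (Fin (n + 1))) ∧
      Module.rank ℝ (LinearMap.range (R : X →ₗ[ℝ] Y)) ≤ (n + 1 : ℕ) := by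
  obtain ⟨P, hPP, hPn, u, hu, hu'⟩ := hXn
  obtain ⟨Q, hQQ, hQn, v, hv, hv'⟩ := hYn
  have hC0 : (0:ℝ) ≤ C := le_trans zero_le_one hC
  set uc : ↥(LinearMap.range (P : X →ₗ[ℝ] X)) →L[ℝ] EuclideanSpace ℝ (Fin (n + 1)) := (u : ↥(LinearMap.range (P : X →ₗ[ℝ] X)) →L[ℝ] EuclideanSpace ℝ (Fin (n + 1))) with huc
  set us : EuclideanSpace ℝ (Fin (n + 1)) →L[ℝ] ↥(LinearMap.range (P : X →ₗ[ℝ] X)) := (u.symm : EuclideanSpace ℝ (Fin (n + 1)) →L[ℝ] ↥(LinearMap.range (P : X →ₗ[ℝ] X))) with hus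
  set vc : ↥(LinearMap.range (Q : Y →ₗ[ℝ] Y)) →L[ℝ] EuclideanSpace ℝ (Fin (n + 1)) := (v : ↥(LinearMap.range (Q : Y →ₗ[ℝ] Y)) →L[ℝ] EuclideanSpace ℝ (Fin (n + 1))) with hvc
  set vs : EuclideanSpace ℝ (Fin (n + 1)) →L[ℝ] ↥(LinearMap.range (Q : Y →ₗ[ℝ] Y)) := (v.symm : EuclideanSpace ℝ (Fin (n + 1)) →L[ℝ] ↥(LinearMap.range (Q : Y →ₗ[ℝ] Y))) with hvs
  -- fixed points
  have hPfix : ∀ x : ↥(LinearMap.range (P : X →ₗ[ℝ] X)), P (x : X) = (x : X) := by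
    rintro ⟨_, y, rfl⟩
    have := congrArg (fun f : X →L[ℝ] X => f y) hPP
    simpa using this
  have hQfix : ∀ x : ↥(LinearMap.range (Q : Y →ₗ[ℝ] Y)), Q (x : Y) = (x : Y) := by
    rintro ⟨_, y, rfl⟩
    have := congrArg (fun f : Y →L[ℝ] Y => f y) hQQ
    simpa using this
  set Pc : X →L[ℝ] ↥(LinearMap.range (P : X →ₗ[ℝ] X)) :=
    P.codRestrict (LinearMap.range (P : X →ₗ[ℝ] X)) (fun x => LinearMap.mem_range_self _ x) with hPc
  set Qc : Y →L[ℝ] ↥(LinearMap.range (Q : Y →ₗ[ℝ] Y)) :=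
    Q.codRestrict (LinearMap.range (Q : Y →ₗ[ℝ] Y)) (fun x => LinearMap.mem_range_self _ x) with hQc
  have hPcn : ∀ x : X, ‖Pc x‖ ≤ C * ‖x‖ := fun x =>
    le_trans (le_of_eq (rfl : ‖Pc x‖ = ‖P x‖))
      (le_trans (P.le_opNorm x) (mul_le_mul_of_nonneg_right hPn (norm_nonneg _)))
  have hQcn : ∀ y : Y, ‖Qc y‖ ≤ C * ‖y‖ := fun y =>
    le_trans (le_of_eq (rfl : ‖Qc y‖ = ‖Q y‖))
      (le_trans (Q.le_opNorm y) (mul_le_mul_of_nonneg_right hQn (norm_nonneg _)))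
  set A : EuclideanSpace ℝ (Fin (n + 1)) →L[ℝ] X := (LinearMap.range (P : X →ₗ[ℝ] X)).subtypeL.comp us with hA
  set B : Y →L[ℝ] EuclideanSpace ℝ (Fin (n + 1)) := vc.comp Qc with hB
  set S : EuclideanSpace ℝ (Fin (n + 1)) →L[ℝ] Y := (LinearMap.range (Q : Y →ₗ[ℝ] Y)).subtypeL.comp vs with hS
  set A' : X →L[ℝ] EuclideanSpace ℝ (Fin (n + 1)) := uc.comp Pc with hA'
  have hAx : ∀ x : EuclideanSpace ℝ (Fin (n + 1)), A x = ((us x : ↥(LinearMap.range (P : X →ₗ[ℝ] X))) : X) := fun x => rfl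
  have hSx : ∀ x : EuclideanSpace ℝ (Fin (n + 1)), S x = ((vs x : ↥(LinearMap.range (Q : Y →ₗ[ℝ] Y))) : Y) := fun x => rfl
  refine ⟨S.comp A', A, B, ?_, ?_, ?_, ?_, ?_⟩
  · -- norm R
    refine ContinuousLinearMap.opNorm_le_bound _ (by positivity) fun x => ?_
    have h1 : ‖S.comp A' x‖ = ‖vs (A' x)‖ := by
      rw [ContinuousLinearMap.comp_apply, hSx]
      exact (Submodule.coe_norm _).symm
    calc ‖S.comp A' x‖ = ‖vs (A' x)‖ := h1
      _ ≤ C * ‖A' x‖ :=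
        le_trans (vs.le_opNorm _) (mul_le_mul_of_nonneg_right hv' (norm_nonneg _))
      _ ≤ C * (C * ‖Pc x‖) := by
          refine mul_le_mul_of_nonneg_left ?_ hC0
          rw [hA', ContinuousLinearMap.comp_apply]
          exact le_trans (uc.le_opNorm _)
            (mul_le_mul_of_nonneg_right hu (norm_nonneg _))
      _ ≤ C * (C * (C * ‖x‖)) := by
          exact mul_le_mul_of_nonneg_left
            (mul_le_mul_of_nonneg_left (hPcn x) hC0) hC0
      _ = C ^ 3 * ‖x‖ := by ring
  · -- norm A
    refine ContinuousLinearMap.opNorm_le_bound _ hC0 fun x => ?_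
    have h1 : ‖A x‖ = ‖us x‖ := by rw [hAx]; exact (Submodule.coe_norm _).symm
    rw [h1]
    exact le_trans (us.le_opNorm _) (mul_le_mul_of_nonneg_right hu' (norm_nonneg _))
  · -- norm B
    refine ContinuousLinearMap.opNorm_le_bound _ (by positivity) fun y => ?_
    calc ‖B y‖ = ‖vc (Qc y)‖ := rfl
      _ ≤ C * ‖Qc y‖ :=
        le_trans (vc.le_opNorm _) (mul_le_mul_of_nonneg_right hv (norm_nonneg _))
      _ ≤ C * (C * ‖y‖) := mul_le_mul_of_nonneg_left (hQcn y) hC0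
      _ = C ^ 2 * ‖y‖ := by ring
  · -- B (R (A x)) = x
    apply ContinuousLinearMap.ext
    intro x
    simp only [ContinuousLinearMap.comp_apply, ContinuousLinearMap.id_apply]
    have h1 : Pc (A x) = us x := by
      apply Subtype.ext
      have h2 : (Pc (A x) : X) = P (A x) := rfl
      rw [h2, hAx, hPfix]
    have h3 : A' (A x) = x := by
      rw [hA', ContinuousLinearMap.comp_apply, h1]
      show u (u.symm x) = x
      exact u.apply_symm_apply x
    rw [h3, hSx x]
    have h5 : Qc ((vs x : ↥(LinearMap.range (Q : Y →ₗ[ℝ] Y))) : Y) = vs x := by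
      apply Subtype.ext
      have h6 : (Qc ((vs x : ↥(LinearMap.range (Q : Y →ₗ[ℝ] Y))) : Y) : Y)
          = Q ((vs x : ↥(LinearMap.range (Q : Y →ₗ[ℝ] Y))) : Y) := rfl
      rw [h6, hQfix]
    rw [hB, ContinuousLinearMap.comp_apply, h5]
    show v (v.symm x) = x
    exact v.apply_symm_apply x
  · -- rank
    have h1 : LinearMap.rank ((S.comp A' : X →L[ℝ] Y) : X →ₗ[ℝ] Y)
        ≤ LinearMap.rank (S : EuclideanSpace ℝ (Fin (n + 1)) →ₗ[ℝ] Y) := by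
      show LinearMap.rank ((S : EuclideanSpace ℝ (Fin (n + 1)) →ₗ[ℝ] Y).comp (A' : X →ₗ[ℝ] EuclideanSpace ℝ (Fin (n + 1)))) ≤ _
      exact LinearMap.rank_comp_le_left _ _
    have h2 : LinearMap.rank (S : EuclideanSpace ℝ (Fin (n + 1)) →ₗ[ℝ] Y) ≤ Module.rank ℝ (EuclideanSpace ℝ (Fin (n + 1))) := LinearMap.rank_le_domain _
    have h3 : Module.rank ℝ (EuclideanSpace ℝ (Fin (n + 1))) = (n + 1 : ℕ) := by
      rw [← Module.finrank_eq_rank, finrank_euclideanSpace_fin]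
    exact le_trans (le_trans h1 h2) (le_of_eq h3)

end

/-- Let `X, Y` be Banach spaces admitting uniformly complemented
copies of `ℓ²_n` for each `n`. Then for every s-numbers sequence `s` and every
non-increasing positive null sequence `(ε_n)` there is an approximable operator
`T : X → Y` with `s_n(T) ≠ O(ε_n)`. -/
theorem stmt16 (X Y : Type) [NormedAddCommGroup X] [NormedSpace ℝ X] [CompleteSpace X]
    [NormedAddCommGroup Y] [NormedSpace ℝ Y] [CompleteSpace Y]
    (C : ℝ) (hC : 1 ≤ C) (hX : UnifComplEuclidean C X) (hY : UnifComplEuclidean C Y)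
    (σ : SNumberScale)
    (ε : ℕ → ℝ) (hεpos : ∀ n, 0 < ε n) (hεmono : ∀ n, ε (n + 1) ≤ ε n)
    (hεlim : Filter.Tendsto ε Filter.atTop (nhds 0)) :
    ∃ T : X →L[ℝ] Y, IsApproximable T ∧
      ¬ ∃ K : ℝ, 0 < K ∧ ∀ n : ℕ, σ.s X Y T n ≤ K * ε n := by
  classical
  have hC0 : (0:ℝ) < C := lt_of_lt_of_le one_pos hC
  choose R A B hRn hAn hBn hBRA hrank using fun n => exists_blocks C hC n (hX n) (hY n)
  set C3 : ℝ := C ^ 3 with hC3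
  have hC3pos : 0 < C3 := by positivity
  have hC31 : 1 ≤ C3 := one_le_pow₀ hC
  set θ : ℝ := (4 * C ^ 6)⁻¹ with hθdef
  have hC6 : (1:ℝ) ≤ C ^ 6 := one_le_pow₀ hC
  have hθpos : 0 < θ := by positivity
  have hθle : θ ≤ 1/4 := by
    rw [hθdef]
    rw [inv_le_comm₀ (by positivity) (by norm_num)]
    nlinarith
  have hθlt : θ < 1 := lt_of_le_of_lt hθle (by norm_num)
  have h1θ : (0:ℝ) < 1 - θ := by linarith
  set δ : ℕ → ℝ := fun k => (2/3) * θ ^ k / C3 with hδdef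
  have hδpos : ∀ k, 0 < δ k := fun k => by
    have : (0:ℝ) < θ ^ k := pow_pos hθpos k
    rw [hδdef]; positivity
  -- choose a k with ε (a k) small
  have hak : ∀ k : ℕ, ∃ a : ℕ, ε a < δ k / (k + 1) := by
    intro k
    have hpos : 0 < δ k / (k + 1) := by
      have : (0:ℝ) < (k:ℝ) + 1 := by positivity
      exact div_pos (hδpos k) this
    have := (hεlim.eventually (eventually_lt_nhds hpos)).exists
    simpa using this
  choose a ha using hak
  -- the recursion for m
  let m : ℕ → ℕ := fun k => Nat.rec 0 (fun k mk => mk + (a k + mk + 1)) k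
  have hm0 : m 0 = 0 := rfl
  set nk : ℕ → ℕ := fun k => a k + m k with hnk
  have hmsucc : ∀ k, m (k + 1) = m k + (nk k + 1) := by
    intro k
    show m k + (a k + m k + 1) = m k + (nk k + 1)
    rw [hnk]
  -- the operator
  set f : ℕ → (X →L[ℝ] Y) := fun j => θ ^ j • R (nk j) with hfdef
  have hfnorm : ∀ j, ‖f j‖ ≤ C3 * θ ^ j := by
    intro j
    rw [hfdef]
    calc ‖θ ^ j • R (nk j)‖ ≤ ‖θ ^ j‖ * ‖R (nk j)‖ := ContinuousLinearMap.opNorm_smul_le _ _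
      _ = θ ^ j * ‖R (nk j)‖ := by
          rw [Real.norm_of_nonneg (le_of_lt (pow_pos hθpos j))]
      _ ≤ θ ^ j * C3 :=
          mul_le_mul_of_nonneg_left (hRn (nk j)) (le_of_lt (pow_pos hθpos j))
      _ = C3 * θ ^ j := mul_comm _ _
  have hgeo : Summable (fun j : ℕ => C3 * θ ^ j) :=
    (summable_geometric_of_lt_one (le_of_lt hθpos) hθlt).mul_left C3
  have hsum : Summable f := Summable.of_norm_bounded hgeo hfnorm
  set T : X →L[ℝ] Y := ∑' j, f j with hT
  set F : ℕ → (X →L[ℝ] Y) := fun k => ∑ j ∈ Finset.range k, f j with hF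
  set G : ℕ → (X →L[ℝ] Y) := fun k => ∑' j, f (j + k) with hG
  have hsumk : ∀ k, Summable (fun j => f (j + k)) := fun k =>
    (summable_nat_add_iff k).mpr hsum
  have hsplit : ∀ k, F k + G k = T := fun k => Summable.sum_add_tsum_nat_add k hsum
  have hGbound : ∀ k, ‖G k‖ ≤ C3 * θ ^ k * (1 - θ)⁻¹ := by
    intro k
    have hnormsum : Summable (fun j => ‖f (j + k)‖) := by
      refine Summable.of_nonneg_of_le (fun j => norm_nonneg _)
        (fun j => hfnorm (j + k)) ?_
      exact (summable_nat_add_iff k).mpr hgeo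
    have h1 : ‖G k‖ ≤ ∑' j, ‖f (j + k)‖ := by
      rw [hG]; exact norm_tsum_le_tsum_norm hnormsum
    have h2 : ∑' j, ‖f (j + k)‖ ≤ ∑' j : ℕ, C3 * θ ^ k * θ ^ j := by
      refine Summable.tsum_le_tsum (fun j => ?_) hnormsum ?_
      · calc ‖f (j + k)‖ ≤ C3 * θ ^ (j + k) := hfnorm _
          _ = C3 * θ ^ k * θ ^ j := by rw [pow_add]; ring
      · exact ((summable_geometric_of_lt_one (le_of_lt hθpos) hθlt).mul_left _)
    have h3 : ∑' j : ℕ, C3 * θ ^ k * θ ^ j = C3 * θ ^ k * (1 - θ)⁻¹ := by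
      rw [tsum_mul_left, tsum_geometric_of_lt_one (le_of_lt hθpos) hθlt]
    linarith
  -- rank of partial sums
  have hrangef : ∀ j, Module.rank ℝ (LinearMap.range ((f j : X →L[ℝ] Y) : X →ₗ[ℝ] Y)) ≤ ((nk j + 1 : ℕ) : Cardinal) := by
    intro j
    have hle : LinearMap.range ((f j : X →L[ℝ] Y) : X →ₗ[ℝ] Y) ≤ LinearMap.range ((R (nk j) : X →L[ℝ] Y) : X →ₗ[ℝ] Y) := by
      rintro x ⟨y, rfl⟩
      exact ⟨θ ^ j • y, by simp [hfdef]⟩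
    exact le_trans (Submodule.rank_mono hle) (by exact_mod_cast hrank (nk j))
  have hrankF : ∀ k, Module.rank ℝ (LinearMap.range ((F k : X →L[ℝ] Y) : X →ₗ[ℝ] Y)) ≤ (Nat.cast (m k) : Cardinal) := by
    intro k
    induction k with
    | zero =>
        have h0 : F 0 = 0 := by simp [hF]
        have h1 : LinearMap.range ((F 0 : X →L[ℝ] Y) : X →ₗ[ℝ] Y) = ⊥ := by
          rw [h0]
          exact LinearMap.range_zero
        rw [h1, hm0]
        simp [rank_bot]
    | succ k ih =>
        have hFs : F (k + 1) = F k + f k := by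
          rw [hF]; exact Finset.sum_range_succ f k
        have hadd : Module.rank ℝ (LinearMap.range ((F (k + 1) : X →L[ℝ] Y) : X →ₗ[ℝ] Y))
            ≤ Module.rank ℝ (LinearMap.range ((F k : X →L[ℝ] Y) : X →ₗ[ℝ] Y))
              + Module.rank ℝ (LinearMap.range ((f k : X →L[ℝ] Y) : X →ₗ[ℝ] Y)) := by
          rw [hFs]
          have := LinearMap.rank_add_le ((F k : X →L[ℝ] Y) : X →ₗ[ℝ] Y)
            ((f k : X →L[ℝ] Y) : X →ₗ[ℝ] Y)
          rw [← ContinuousLinearMap.coe_add] at this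
          exact this
        calc Module.rank ℝ (LinearMap.range ((F (k + 1) : X →L[ℝ] Y) : X →ₗ[ℝ] Y))
            ≤ Module.rank ℝ (LinearMap.range ((F k : X →L[ℝ] Y) : X →ₗ[ℝ] Y))
              + Module.rank ℝ (LinearMap.range ((f k : X →L[ℝ] Y) : X →ₗ[ℝ] Y)) := hadd
          _ ≤ (Nat.cast (m k) : Cardinal) + ((nk k + 1 : ℕ) : Cardinal) :=
              add_le_add ih (hrangef k)
          _ = (Nat.cast (m (k + 1)) : Cardinal) := by
              rw [hmsucc k]; push_cast; ring
  refine ⟨T, ?_, ?_⟩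
  · -- approximable
    have htend : Filter.Tendsto F Filter.atTop (nhds T) := by
      rw [hT]; exact hsum.hasSum.tendsto_sum_nat
    refine mem_closure_of_tendsto htend ?_
    filter_upwards with k
    have : Module.rank ℝ (LinearMap.range ((F k : X →L[ℝ] Y) : X →ₗ[ℝ] Y)) < Cardinal.aleph0 :=
      lt_of_le_of_lt (hrankF k) (Cardinal.nat_lt_aleph0 _)
    exact Module.rank_lt_aleph0_iff.mp this
  · -- not O(ε)
    rintro ⟨K, hK, hbound⟩
    obtain ⟨k, hk⟩ := exists_nat_ge K
    have hkK : K ≤ (k:ℝ) + 1 := le_trans hk (by linarith)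
    -- key lower bound at a k
    have hkey : δ k ≤ σ.s X Y T (a k) := by
      have hθkpos : (0:ℝ) < θ ^ k := pow_pos hθpos k
      -- G k = f k + G (k+1)
      have hGdec : G k = f k + G (k + 1) := by
        have h1 := hsplit k
        have h2 := hsplit (k + 1)
        have h3 : F (k + 1) = F k + f k := Finset.sum_range_succ f k
        have h4 : F k + G k = F k + (f k + G (k + 1)) := by
          rw [h1, ← h2, h3]; abel
        exact add_left_cancel h4
      set idE := ContinuousLinearMap.id ℝ (EuclideanSpace ℝ (Fin (nk k + 1))) with hidE
      set W : EuclideanSpace ℝ (Fin (nk k + 1)) →L[ℝ] EuclideanSpace ℝ (Fin (nk k + 1)) :=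
        (B (nk k)).comp ((G k).comp (A (nk k))) with hWdef
      set Eop : EuclideanSpace ℝ (Fin (nk k + 1)) →L[ℝ] EuclideanSpace ℝ (Fin (nk k + 1)) :=
        (B (nk k)).comp ((G (k + 1)).comp (A (nk k))) with hEopdef
      have hWdec : W = θ ^ k • idE + Eop := by
        rw [hWdef, hGdec, ContinuousLinearMap.add_comp, ContinuousLinearMap.comp_add]
        congr 1
        have hfk : f k = θ ^ k • R (nk k) := rfl
        rw [hfk, ContinuousLinearMap.smul_comp, ContinuousLinearMap.comp_smul, hBRA (nk k)]
      -- norm of the error term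
      have hCne : C ≠ 0 := ne_of_gt hC0
      have hCθ : C ^ 6 * θ = 1 / 4 := by
        rw [hθdef]
        field_simp
      have hinv : (1 - θ)⁻¹ ≤ 4 / 3 := by
        have h34 : (3/4 : ℝ) ≤ 1 - θ := by linarith
        calc (1 - θ)⁻¹ ≤ (3/4 : ℝ)⁻¹ := inv_anti₀ (by norm_num) h34
          _ = 4 / 3 := by norm_num
      have hEopnorm : ‖Eop‖ ≤ θ ^ k / 3 := by
        have h1 : ‖Eop‖ ≤ ‖B (nk k)‖ * (‖G (k + 1)‖ * ‖A (nk k)‖) := by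
          refine le_trans (ContinuousLinearMap.opNorm_comp_le _ _) ?_
          exact mul_le_mul_of_nonneg_left (ContinuousLinearMap.opNorm_comp_le _ _)
            (norm_nonneg _)
        have h2 : ‖B (nk k)‖ * (‖G (k + 1)‖ * ‖A (nk k)‖)
            ≤ C ^ 2 * ((C3 * θ ^ (k + 1) * (1 - θ)⁻¹) * C) := by
          have hA0 : (0:ℝ) ≤ ‖A (nk k)‖ := norm_nonneg _
          have hGb := hGbound (k + 1)
          have hstep : ‖G (k + 1)‖ * ‖A (nk k)‖
              ≤ (C3 * θ ^ (k + 1) * (1 - θ)⁻¹) * C :=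
            mul_le_mul hGb (hAn (nk k)) hA0 (by positivity)
          exact mul_le_mul (hBn (nk k)) hstep (by positivity) (by positivity)
        have h3 : C ^ 2 * ((C3 * θ ^ (k + 1) * (1 - θ)⁻¹) * C)
            = (C ^ 6 * θ) * (θ ^ k * (1 - θ)⁻¹) := by
          rw [hC3, pow_succ]
          ring
        have h4 : (C ^ 6 * θ) * (θ ^ k * (1 - θ)⁻¹) ≤ θ ^ k / 3 := by
          rw [hCθ]
          have h5 : θ ^ k * (1 - θ)⁻¹ ≤ θ ^ k * (4 / 3) :=
            mul_le_mul_of_nonneg_left hinv (le_of_lt hθkpos)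
          linarith
        linarith
      -- lower bound for s of the scalar multiple of the identity
      have hid : σ.s _ _ idE (nk k) = 1 := σ.id_euclidean (nk k)
      have hsmul_lower : θ ^ k ≤ σ.s _ _ (θ ^ k • idE) (nk k) := by
        have hcomp := σ.comp_le _ _ _ (θ ^ k • idE) ((θ ^ k)⁻¹ • idE) 0 (nk k)
        have hc : ((θ ^ k)⁻¹ • idE).comp (θ ^ k • idE) = idE := by
          rw [ContinuousLinearMap.smul_comp, ContinuousLinearMap.comp_smul, smul_smul,
            inv_mul_cancel₀ (ne_of_gt hθkpos), one_smul, ContinuousLinearMap.comp_id]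
        rw [hc, zero_add, hid] at hcomp
        have hn0 : σ.s _ _ ((θ ^ k)⁻¹ • idE) 0 = ‖(θ ^ k)⁻¹ • idE‖ :=
          σ.first_eq_norm _ _ _
        have hnb : ‖(θ ^ k)⁻¹ • idE‖ ≤ (θ ^ k)⁻¹ := by
          refine le_trans (ContinuousLinearMap.opNorm_smul_le _ _) ?_
          rw [Real.norm_of_nonneg (le_of_lt (inv_pos.mpr hθkpos))]
          calc (θ ^ k)⁻¹ * ‖idE‖ ≤ (θ ^ k)⁻¹ * 1 :=
              mul_le_mul_of_nonneg_left ContinuousLinearMap.norm_id_le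
                (le_of_lt (inv_pos.mpr hθkpos))
            _ = (θ ^ k)⁻¹ := mul_one _
        have hs0 : (0:ℝ) ≤ σ.s _ _ (θ ^ k • idE) (nk k) := σ.nonneg _ _ _ _
        have h1 : (1:ℝ) ≤ (θ ^ k)⁻¹ * σ.s _ _ (θ ^ k • idE) (nk k) := by
          calc (1:ℝ) ≤ σ.s _ _ ((θ ^ k)⁻¹ • idE) 0 * σ.s _ _ (θ ^ k • idE) (nk k) :=
              hcomp
            _ ≤ (θ ^ k)⁻¹ * σ.s _ _ (θ ^ k • idE) (nk k) := by
              rw [hn0]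
              exact mul_le_mul_of_nonneg_right hnb hs0
        calc θ ^ k = θ ^ k * 1 := (mul_one _).symm
          _ ≤ θ ^ k * ((θ ^ k)⁻¹ * σ.s _ _ (θ ^ k • idE) (nk k)) :=
            mul_le_mul_of_nonneg_left h1 (le_of_lt hθkpos)
          _ = σ.s _ _ (θ ^ k • idE) (nk k) := by
            rw [← mul_assoc, mul_inv_cancel₀ (ne_of_gt hθkpos), one_mul]
      -- lower bound for s of W
      have hWlow : (2/3) * θ ^ k ≤ σ.s _ _ W (nk k) := by
        have hadd := σ.add_le _ _ W (θ ^ k • idE - W) (nk k) 0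
        have he : W + (θ ^ k • idE - W) = θ ^ k • idE := by abel
        rw [he, add_zero] at hadd
        have hn0 : σ.s _ _ (θ ^ k • idE - W) 0 = ‖θ ^ k • idE - W‖ :=
          σ.first_eq_norm _ _ _
        have hsub : θ ^ k • idE - W = -Eop := by
          rw [hWdec]; abel
        have hnb : ‖θ ^ k • idE - W‖ ≤ θ ^ k / 3 := by
          rw [hsub, norm_neg]
          exact hEopnorm
        rw [hn0] at hadd
        have := hsmul_lower
        linarith
      -- upper bound: s W ≤ C3 * s (G k)
      have hsG0 : (0:ℝ) ≤ σ.s X Y (G k) (nk k) := σ.nonneg _ _ _ _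
      have hWup : σ.s _ _ W (nk k) ≤ C3 * σ.s X Y (G k) (nk k) := by
        have h1 := σ.comp_le _ _ _ ((G k).comp (A (nk k))) (B (nk k)) 0 (nk k)
        rw [zero_add] at h1
        have h2 := σ.comp_le _ _ _ (A (nk k)) (G k) (nk k) 0
        rw [add_zero] at h2
        have hb0 : σ.s _ _ (B (nk k)) 0 = ‖B (nk k)‖ := σ.first_eq_norm _ _ _
        have ha0 : σ.s _ _ (A (nk k)) 0 = ‖A (nk k)‖ := σ.first_eq_norm _ _ _
        have hsGA0 : (0:ℝ) ≤ σ.s _ _ ((G k).comp (A (nk k))) (nk k) := σ.nonneg _ _ _ _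
        calc σ.s _ _ W (nk k)
            ≤ σ.s _ _ (B (nk k)) 0 * σ.s _ _ ((G k).comp (A (nk k))) (nk k) := h1
          _ ≤ C ^ 2 * σ.s _ _ ((G k).comp (A (nk k))) (nk k) := by
              rw [hb0]
              exact mul_le_mul_of_nonneg_right (hBn (nk k)) hsGA0
          _ ≤ C ^ 2 * (σ.s X Y (G k) (nk k) * σ.s _ _ (A (nk k)) 0) := by
              refine mul_le_mul_of_nonneg_left h2 (by positivity)
          _ ≤ C ^ 2 * (σ.s X Y (G k) (nk k) * C) := by
              refine mul_le_mul_of_nonneg_left ?_ (by positivity)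
              rw [ha0]
              exact mul_le_mul_of_nonneg_left (hAn (nk k)) hsG0
          _ = C3 * σ.s X Y (G k) (nk k) := by rw [hC3]; ring
      -- lower bound for s (G k)
      have hGlow : δ k ≤ σ.s X Y (G k) (nk k) := by
        rw [hδdef]
        rw [div_le_iff₀ hC3pos]
        calc (2/3) * θ ^ k ≤ σ.s _ _ W (nk k) := hWlow
          _ ≤ C3 * σ.s X Y (G k) (nk k) := hWup
          _ = σ.s X Y (G k) (nk k) * C3 := mul_comm _ _
      -- s (G k) (nk k) ≤ s T (a k)
      have hGup : σ.s X Y (G k) (nk k) ≤ σ.s X Y T (a k) := by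
        have hadd := σ.add_le X Y T (-(F k)) (a k) (m k)
        have hG' : T + -(F k) = G k := by
          rw [← hsplit k]; abel
        have hr0 : σ.s X Y (-(F k)) (m k) = 0 := by
          apply σ.rank_small
          have hre : LinearMap.range ((-(F k) : X →L[ℝ] Y) : X →ₗ[ℝ] Y) = LinearMap.range ((F k : X →L[ℝ] Y) : X →ₗ[ℝ] Y) := by
            have : ((-(F k) : X →L[ℝ] Y) : X →ₗ[ℝ] Y)
                = -((F k : X →L[ℝ] Y) : X →ₗ[ℝ] Y) := rfl
            show LinearMap.range ((-(F k) : X →L[ℝ] Y) : X →ₗ[ℝ] Y)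
              = LinearMap.range ((F k : X →L[ℝ] Y) : X →ₗ[ℝ] Y)
            rw [this, LinearMap.range_neg]
          rw [hre]
          refine lt_of_le_of_lt (hrankF k) ?_
          exact_mod_cast Nat.lt_succ_self (m k)
        rw [hG', hr0, add_zero] at hadd
        have hind : nk k = a k + m k := rfl
        rw [hind]
        exact hadd
      exact le_trans hGlow hGup
    have h1 : σ.s X Y T (a k) ≤ K * ε (a k) := hbound (a k)
    have h2 : K * ε (a k) ≤ ((k:ℝ) + 1) * ε (a k) :=
      mul_le_mul_of_nonneg_right hkK (le_of_lt (hεpos _))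
    have h3 : ((k:ℝ) + 1) * ε (a k) < δ k := by
      have := ha k
      have hkpos : (0:ℝ) < (k:ℝ) + 1 := by positivity
      rw [lt_div_iff₀ hkpos] at this
      linarith
    linarith
end
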